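/- arXiv:2308.09849 — 12 statements merged into one kernel-verified Lean document; each statement's English description precedes it below -/
import Mathlib

section
/- Let M ⊆ ℝⁿ be nonempty and let (yᵏ)_{k∈ℕ} be a sequence in ℝⁿ that is Fejér* monotone with respect to M. Then (yᵏ) is Fejér* monotone with respect to the convex hull conv(M) of M, i.e. for every y ∈ conv(M) there exists K ∈ ℕ such that ‖yᵏ⁺¹ − y‖ ≤ ‖yᵏ − y‖ for all k ≥ K. -/
open scoped RealInnerProductSpace

lemma fejer_convex_step {E : Type*} [NormedAddCommGroup E] [InnerProductSpace ℝ E]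
    (u v a b : E) (θ σ : ℝ) (hθ : 0 ≤ θ) (hσ : 0 ≤ σ) (hsum : θ + σ = 1)
    (ha : ‖u - a‖ ≤ ‖v - a‖) (hb : ‖u - b‖ ≤ ‖v - b‖) :
    ‖u - (θ • a + σ • b)‖ ≤ ‖v - (θ • a + σ • b)‖ := by
  have ha2 : ‖u - a‖ ^ 2 ≤ ‖v - a‖ ^ 2 := by
    exact pow_le_pow_left₀ (norm_nonneg _) ha 2
  have hb2 : ‖u - b‖ ^ 2 ≤ ‖v - b‖ ^ 2 := by
    exact pow_le_pow_left₀ (norm_nonneg _) hb 2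
  rw [← Real.sqrt_sq (norm_nonneg (u - _)), ← Real.sqrt_sq (norm_nonneg (v - _))]
  apply Real.sqrt_le_sqrt
  simp only [@norm_sub_sq_real E, inner_add_right, real_inner_smul_right] at *
  nlinarith [ha2, hb2]

theorem stmt_2 {n : ℕ} (M : Set (EuclideanSpace ℝ (Fin n))) (hM : M.Nonempty)
    (y : ℕ → EuclideanSpace ℝ (Fin n))
    (hF : ∀ z ∈ M, ∃ N : ℕ, ∀ k ≥ N, ‖y (k + 1) - z‖ ≤ ‖y k - z‖) :
    ∀ z ∈ convexHull ℝ M, ∃ K : ℕ, ∀ k ≥ K, ‖y (k + 1) - z‖ ≤ ‖y k - z‖ := by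
  have hconv : Convex ℝ {z : EuclideanSpace ℝ (Fin n) |
      ∃ K : ℕ, ∀ k ≥ K, ‖y (k + 1) - z‖ ≤ ‖y k - z‖} := by
    rintro a ⟨Na, hNa⟩ b ⟨Nb, hNb⟩ θ σ hθ hσ hsum
    exact ⟨max Na Nb, fun k hk => fejer_convex_step _ _ a b θ σ hθ hσ hsum
      (hNa k (le_trans (le_max_left _ _) hk)) (hNb k (le_trans (le_max_right _ _) hk))⟩
  intro z hz
  exact convexHull_min hF hconv hz
end

section
/- Let M ⊆ ℝⁿ be nonempty and let (yᵏ)_{k∈ℕ} be a sequence in ℝⁿ that is Fejér* monotone with respect to M. Then for every ȳ in the closure of the convex hull of M, the real sequence (‖yᵏ − ȳ‖)_{k∈ℕ} converges (to some nonnegative limit). -/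
/-!
Let `S` be the set of points `x` for which `‖yᵏ - x‖` converges. It contains `M`, since an
eventually nonincreasing nonnegative sequence converges; it is convex because
`‖u - (a x + b z)‖² = a ‖u - x‖² + b ‖u - z‖² - a b ‖x - z‖²` whenever `a + b = 1`; and it is
closed because `x ↦ ‖yᵏ - x‖` is 1-Lipschitz uniformly in `k`. Hence `S` contains the closure
of the convex hull of `M`.
-/

open Filter Topology

lemma exists_tendsto_of_nonneg_of_eventually_succ_le {f : ℕ → ℝ} (h0 : ∀ k, 0 ≤ f k) (N : ℕ)
    (hf : ∀ k ≥ N, f (k + 1) ≤ f k) : ∃ L, Tendsto f atTop (𝓝 L) := by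
  have hanti : Antitone fun k => f (k + N) :=
    antitone_nat_of_succ_le fun k => by
      rw [Nat.add_right_comm]
      exact hf _ (Nat.le_add_left N k)
  have hbdd : BddBelow (Set.range fun k => f (k + N)) := ⟨0, by rintro _ ⟨k, rfl⟩; exact h0 _⟩
  exact ⟨_, (tendsto_add_atTop_iff_nat N).mp (tendsto_atTop_ciInf hanti hbdd)⟩

lemma norm_sub_smul_add_smul_sq {E : Type*} [NormedAddCommGroup E] [InnerProductSpace ℝ E]
    (u x z : E) {a b : ℝ} (hab : a + b = 1) :
    ‖u - (a • x + b • z)‖ ^ 2 = a * ‖u - x‖ ^ 2 + b * ‖u - z‖ ^ 2 - a * b * ‖x - z‖ ^ 2 := by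
  have hcomb : u - (a • x + b • z) = a • (u - x) + b • (u - z) := by
    conv_lhs => rw [← one_smul ℝ u, ← hab]
    rw [add_smul, smul_sub, smul_sub]
    abel
  have hdiff : x - z = (u - z) - (u - x) := by abel
  rw [hcomb, hdiff, norm_add_sq_real, norm_sub_sq_real (u - z), norm_smul, norm_smul,
    real_inner_smul_left, real_inner_smul_right, real_inner_comm (u - x), mul_pow, mul_pow,
    Real.norm_eq_abs, Real.norm_eq_abs, sq_abs, sq_abs]
  obtain rfl := eq_sub_of_add_eq hab
  ring

def DistConvergent {α : Type*} [PseudoMetricSpace α] (y : ℕ → α) (x : α) : Prop :=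
  ∃ L, Tendsto (fun k => dist (y k) x) atTop (𝓝 L)

section DistConvergent

variable {α : Type*} [PseudoMetricSpace α]

lemma distConvergent_of_eventually_dist_succ_le {y : ℕ → α} {x : α} (N : ℕ)
    (hy : ∀ k ≥ N, dist (y (k + 1)) x ≤ dist (y k) x) : DistConvergent y x :=
  exists_tendsto_of_nonneg_of_eventually_succ_le (fun _ => dist_nonneg) N hy

lemma isClosed_setOf_distConvergent (y : ℕ → α) : IsClosed {x | DistConvergent y x} := by
  refine isClosed_of_closure_subset fun x hx => cauchySeq_tendsto_of_complete ?_
  refine Metric.cauchySeq_iff'.mpr fun ε hε => ?_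
  obtain ⟨x', ⟨L, hL⟩, hxx'⟩ := Metric.mem_closure_iff.mp hx (ε / 3) (by positivity)
  obtain ⟨N, hN⟩ := Metric.cauchySeq_iff'.mp hL.cauchySeq (ε / 3) (by positivity)
  refine ⟨N, fun k hk => ?_⟩
  calc dist (dist (y k) x) (dist (y N) x)
      ≤ dist (dist (y k) x) (dist (y k) x') + dist (dist (y k) x') (dist (y N) x')
          + dist (dist (y N) x') (dist (y N) x) := dist_triangle4 _ _ _ _
    _ ≤ dist x x' + dist (dist (y k) x') (dist (y N) x') + dist x' x := by
        gcongr
        · exact dist_dist_dist_le_right _ _ _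
        · exact dist_dist_dist_le_right _ _ _
    _ < ε / 3 + ε / 3 + ε / 3 := by
        rw [dist_comm x']
        gcongr
        exact hN k hk
    _ = ε := by ring

end DistConvergent

lemma convex_setOf_distConvergent {E : Type*} [NormedAddCommGroup E] [InnerProductSpace ℝ E]
    (y : ℕ → E) : Convex ℝ {x | DistConvergent y x} := by
  rintro x ⟨Lx, hx⟩ z ⟨Lz, hz⟩ a b - - hab
  simp only [DistConvergent, dist_eq_norm] at hx hz ⊢
  have hsq : Tendsto (fun k => ‖y k - (a • x + b • z)‖ ^ 2) atTop
      (𝓝 (a * Lx ^ 2 + b * Lz ^ 2 - a * b * ‖x - z‖ ^ 2)) := by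
    simp only [norm_sub_smul_add_smul_sq _ x z hab]
    exact ((tendsto_const_nhds.mul (hx.pow 2)).add (tendsto_const_nhds.mul (hz.pow 2))).sub
      tendsto_const_nhds
  refine ⟨_, hsq.sqrt.congr fun k => ?_⟩
  exact Real.sqrt_sq (norm_nonneg _)

theorem stmt_3_general {n : ℕ} (M : Set (EuclideanSpace ℝ (Fin n)))
    (y : ℕ → EuclideanSpace ℝ (Fin n))
    (hF : ∀ z ∈ M, ∃ N : ℕ, ∀ k ≥ N, ‖y (k + 1) - z‖ ≤ ‖y k - z‖) :
    ∀ ybar ∈ closure (convexHull ℝ M),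
      ∃ L : ℝ, 0 ≤ L ∧ Tendsto (fun k => ‖y k - ybar‖) atTop (nhds L) := by
  have hM : M ⊆ {x | DistConvergent y x} := fun z hz => by
    obtain ⟨N, hN⟩ := hF z hz
    exact distConvergent_of_eventually_dist_succ_le N (by simpa only [dist_eq_norm] using hN)
  intro ybar hybar
  obtain ⟨L, hL⟩ : DistConvergent y ybar :=
    closure_minimal (convexHull_min hM (convex_setOf_distConvergent y))
      (isClosed_setOf_distConvergent y) hybar
  simp only [dist_eq_norm] at hL
  exact ⟨L, ge_of_tendsto' hL fun _ => norm_nonneg _, hL⟩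

theorem stmt_3 {n : ℕ} (M : Set (EuclideanSpace ℝ (Fin n))) (hM : M.Nonempty)
    (y : ℕ → EuclideanSpace ℝ (Fin n))
    (hF : ∀ z ∈ M, ∃ N : ℕ, ∀ k ≥ N, ‖y (k + 1) - z‖ ≤ ‖y k - z‖) :
    ∀ ybar ∈ closure (convexHull ℝ M),
      ∃ L : ℝ, 0 ≤ L ∧ Tendsto (fun k => ‖y k - ybar‖) atTop (nhds L) :=
  stmt_3_general M y hF
end

section
/- Let C ⊆ ℝⁿ be a closed convex set with nonempty interior, and let (yᵏ)_{k∈ℕ} be a sequence in ℝⁿ that is Fejér* monotone with respect to int(C), the interior of C. If there exists a cluster point ȳ of (yᵏ) (i.e. a limit of some subsequence of (yᵏ)) with ȳ ∈ C, then the whole sequence (yᵏ) converges to ȳ. -/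
open Filter

theorem stmt_4 {n : ℕ} (C : Set (EuclideanSpace ℝ (Fin n)))
    (hCclosed : IsClosed C) (hCconv : Convex ℝ C)
    (hCint : (interior C).Nonempty)
    (y : ℕ → EuclideanSpace ℝ (Fin n))
    (hF : ∀ z ∈ interior C, ∃ N : ℕ, ∀ k ≥ N, ‖y (k + 1) - z‖ ≤ ‖y k - z‖)
    (ybar : EuclideanSpace ℝ (Fin n)) (hybar : ybar ∈ C)
    (hcluster : ∃ φ : ℕ → ℕ, StrictMono φ ∧ Tendsto (fun j => y (φ j)) atTop (nhds ybar)) :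
    Tendsto y atTop (nhds ybar) := by
  obtain ⟨φ, hφ, hsub⟩ := hcluster
  obtain ⟨x0, hx0⟩ := hCint
  -- Key: for every z in the interior of C, ‖y k - z‖ → ‖ybar - z‖
  have key : ∀ z ∈ interior C,
      Tendsto (fun k => ‖y k - z‖) atTop (nhds ‖ybar - z‖) := by
    intro z hz
    obtain ⟨N, hN⟩ := hF z hz
    set g : ℕ → ℝ := fun k => ‖y (k + N) - z‖ with hg
    have hanti : Antitone g := antitone_nat_of_succ_le fun k => by
      have := hN (k + N) (Nat.le_add_left N k)
      simpa [hg, Nat.add_right_comm] using this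
    have hbdd : BddBelow (Set.range g) := ⟨0, by rintro _ ⟨k, rfl⟩; positivity⟩
    have hgl : Tendsto g atTop (nhds (⨅ k, g k)) := tendsto_atTop_ciInf hanti hbdd
    have hfl : Tendsto (fun k => ‖y k - z‖) atTop (nhds (⨅ k, g k)) :=
      (tendsto_add_atTop_iff_nat N).mp hgl
    have hφtop : Tendsto φ atTop atTop := hφ.tendsto_atTop
    have h1 : Tendsto (fun j => ‖y (φ j) - z‖) atTop (nhds (⨅ k, g k)) :=
      hfl.comp hφtop
    have h2 : Tendsto (fun j => ‖y (φ j) - z‖) atTop (nhds ‖ybar - z‖) :=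
      ((continuous_norm.comp (continuous_id.sub continuous_const)).tendsto ybar).comp hsub
    rwa [tendsto_nhds_unique h1 h2] at hfl
  rw [NormedAddCommGroup.tendsto_atTop]
  intro ε hε
  set M := ‖x0 - ybar‖ with hM
  have hM0 : 0 ≤ M := norm_nonneg _
  set t : ℝ := min 1 (ε / (3 * (M + 1))) with htdef
  have ht0 : 0 < t := by
    apply lt_min one_pos
    positivity
  have ht1 : t ≤ 1 := min_le_left _ _
  have htM : t * M ≤ ε / 3 := by
    have h1 : t ≤ ε / (3 * (M + 1)) := min_le_right _ _
    have h2 : t * M ≤ ε / (3 * (M + 1)) * M :=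
      mul_le_mul_of_nonneg_right h1 hM0
    have h3 : ε / (3 * (M + 1)) * M ≤ ε / 3 := by
      rw [div_mul_eq_mul_div, div_le_div_iff₀ (by positivity) (by norm_num)]
      nlinarith
    linarith
  set z : EuclideanSpace ℝ (Fin n) := ybar + t • (x0 - ybar) with hzdef
  have hz : z ∈ interior C :=
    hCconv.add_smul_sub_mem_interior hybar hx0 ⟨ht0, ht1⟩
  have hzy : ‖z - ybar‖ = t * M := by
    rw [hzdef, hM, add_sub_cancel_left, norm_smul, Real.norm_eq_abs, abs_of_pos ht0]
  have hev : ∀ᶠ k in atTop, ‖y k - z‖ < ‖ybar - z‖ + ε / 3 :=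
    (key z hz).eventually_lt_const (by linarith [hε])
  obtain ⟨N, hN⟩ := eventually_atTop.mp hev
  refine ⟨N, fun k hk => ?_⟩
  have h1 := hN k hk
  have h2 : ‖ybar - z‖ = t * M := by rw [← hzy, norm_sub_rev]
  calc ‖y k - ybar‖ ≤ ‖y k - z‖ + ‖z - ybar‖ := by
        have := norm_add_le (y k - z) (z - ybar)
        simpa [sub_add_sub_cancel] using this
    _ < (t * M + ε / 3) + t * M := by rw [hzy]; linarith [h1, h2 ▸ h1]
    _ ≤ ε := by linarith
end

section
/- Let C ⊆ ℝⁿ be a closed convex set with nonempty interior, and let (yᵏ)_{k∈ℕ} be a sequence in ℝⁿ that is Fejér* monotone with respect to int(C). Suppose (yᵏ) converges to some y* ∈ C and that the sequence of distances dist(yᵏ, C) converges R-linearly to 0 with asymptotic constant η, i.e. limsup_{k→∞} dist(yᵏ, C)^{1/k} ≤ η < 1. Then (yᵏ) converges R-linearly to y* with the same asymptotic constant, i.e. limsup_{k→∞} ‖yᵏ − y*‖^{1/k} ≤ η. -/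
open Filter Metric
open scoped RealInnerProductSpace Topology

set_option maxHeartbeats 4000000

theorem stmt_5 {n : ℕ} (C : Set (EuclideanSpace ℝ (Fin n)))
    (hCclosed : IsClosed C) (hCconv : Convex ℝ C)
    (hCint : (interior C).Nonempty)
    (y : ℕ → EuclideanSpace ℝ (Fin n))
    (hF : ∀ z ∈ interior C, ∃ N : ℕ, ∀ k ≥ N, ‖y (k + 1) - z‖ ≤ ‖y k - z‖)
    (ystar : EuclideanSpace ℝ (Fin n)) (hystar : ystar ∈ C)
    (hconv : Tendsto y atTop (nhds ystar))
    (η : ℝ) (hη : η < 1)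
    (hdist : limsup (fun k => Metric.infDist (y k) C ^ (1 / (k : ℝ))) atTop ≤ η) :
    limsup (fun k => ‖y k - ystar‖ ^ (1 / (k : ℝ))) atTop ≤ η := by
  -- abbreviations
  have hδ0 : ∀ k, 0 ≤ Metric.infDist (y k) C := fun k => Metric.infDist_nonneg
  have hdnn : ∀ k, (0:ℝ) ≤ ‖y k - ystar‖ := fun k => norm_nonneg _
  have hδd : ∀ k, Metric.infDist (y k) C ≤ ‖y k - ystar‖ := fun k => by
    simpa [dist_eq_norm] using Metric.infDist_le_dist_of_mem (x := y k) hystar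
  have hd0 : Tendsto (fun k => ‖y k - ystar‖) atTop (𝓝 0) := by
    simpa using (hconv.sub_const ystar).norm
  have hev_d1 : ∀ᶠ k in atTop, ‖y k - ystar‖ ≤ 1 :=
    hd0.eventually (eventually_le_nhds (by norm_num))
  -- auxiliary rpow/pow conversion
  have key_pow : ∀ (x r : ℝ) (k : ℕ), 0 ≤ x → 1 ≤ k → x ^ (1/(k:ℝ)) < r → x < r ^ k := by
    intro x r k hx hk h
    have hk0 : (k:ℝ) ≠ 0 := Nat.cast_ne_zero.2 (by omega)
    have h0 : (0:ℝ) ≤ x ^ (1/(k:ℝ)) := Real.rpow_nonneg hx _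
    have h2 : (x ^ (1/(k:ℝ)))^k < r^k := pow_lt_pow_left₀ h h0 (by omega)
    calc x = (x ^ (1/(k:ℝ)))^k := by
            rw [← Real.rpow_natCast (x ^ (1/(k:ℝ))) k, ← Real.rpow_mul hx, one_div,
              inv_mul_cancel₀ hk0, Real.rpow_one]
      _ < r ^ k := h2
  have key_pow2 : ∀ (x r : ℝ) (k : ℕ), 0 ≤ x → 0 ≤ r → 1 ≤ k → r < x ^ (1/(k:ℝ)) → r ^ k < x := by
    intro x r k hx hr hk h
    have hk0 : (k:ℝ) ≠ 0 := Nat.cast_ne_zero.2 (by omega)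
    have h2 : r^k < (x ^ (1/(k:ℝ)))^k := pow_lt_pow_left₀ h hr (by omega)
    calc r ^ k < (x ^ (1/(k:ℝ)))^k := h2
      _ = x := by
            rw [← Real.rpow_natCast (x ^ (1/(k:ℝ))) k, ← Real.rpow_mul hx, one_div,
              inv_mul_cancel₀ hk0, Real.rpow_one]
  -- boundedness facts
  have hbddδ : IsBoundedUnder (· ≤ ·) atTop (fun k => Metric.infDist (y k) C ^ (1 / (k : ℝ))) := by
    refine isBoundedUnder_of_eventually_le (a := 1) ?_
    filter_upwards [hev_d1] with k hk
    exact Real.rpow_le_one (hδ0 k) (le_trans (hδd k) hk) (by positivity)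
  have hη0 : 0 ≤ η := by
    refine le_trans (Filter.le_limsup_of_frequently_le ?_ hbddδ) hdist
    exact Filter.Frequently.of_forall fun k => Real.rpow_nonneg (hδ0 k) _
  by_contra hcon
  push_neg at hcon
  set G : ℕ → ℝ := fun k => ‖y k - ystar‖ ^ (1 / (k : ℝ)) with hG
  have hGbdd : IsBoundedUnder (· ≤ ·) atTop G := by
    refine isBoundedUnder_of_eventually_le (a := 1) ?_
    filter_upwards [hev_d1] with k hk
    exact Real.rpow_le_one (hdnn k) hk (by positivity)
  have hGbdd2 : IsBoundedUnder (· ≥ ·) atTop G :=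
    ⟨0, eventually_map.2 (Eventually.of_forall fun k => Real.rpow_nonneg (hdnn k) _)⟩
  have hGcob : IsCoboundedUnder (· ≤ ·) atTop G := hGbdd2.isCoboundedUnder_le
  have hL1 : limsup G atTop ≤ 1 := by
    refine Filter.limsup_le_of_le hGcob ?_
    filter_upwards [hev_d1] with k hk
    exact Real.rpow_le_one (hdnn k) hk (by positivity)
  set L := limsup G atTop with hLdef
  set b := (η + L)/2 with hbdef
  have hbη : η < b := by simp only [hbdef]; linarith
  have hbL : b < L := by simp only [hbdef]; linarith
  have hb0 : 0 < b := lt_of_le_of_lt hη0 hbη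
  set q := (η + b)/2 with hqdef
  have hηq : η < q := by simp only [hqdef]; linarith
  have hqb : q < b := by simp only [hqdef]; linarith
  have hq0 : 0 < q := by simp only [hqdef]; linarith
  have hq1 : q < 1 := lt_of_lt_of_le (lt_trans hqb hbL) hL1
  -- frequently large, eventually small dist
  have hfreq : ∃ᶠ k in atTop, b < G k := Filter.frequently_lt_of_lt_limsup hGcob hbL
  have hevq : ∀ᶠ k in atTop, Metric.infDist (y k) C ^ (1 / (k : ℝ)) < q :=
    Filter.eventually_lt_of_limsup_lt (lt_of_le_of_lt hdist hηq) hbddδ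
  have hP : ∃ᶠ k in atTop, b < G k ∧ (Metric.infDist (y k) C ^ (1 / (k : ℝ)) < q ∧ 1 ≤ k) :=
    hfreq.and_eventually (hevq.and (eventually_ge_atTop 1))
  obtain ⟨φ, hφ, hφP⟩ := Filter.extraction_of_frequently_atTop hP
  -- projections
  have hCne : C.Nonempty := ⟨ystar, hystar⟩
  choose p hpC hpd using fun k => hCclosed.exists_infDist_eq_dist hCne (y k)
  set v : ℕ → EuclideanSpace ℝ (Fin n) := fun k => p k - ystar with hvdef
  have hkey : ∀ i, b ^ (φ i) < ‖y (φ i) - ystar‖ ∧ ‖y (φ i) - p (φ i)‖ ≤ q ^ (φ i) ∧ 1 ≤ φ i := by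
    intro i
    obtain ⟨h1, h2, h3⟩ := hφP i
    refine ⟨key_pow2 _ _ _ (hdnn _) hb0.le h3 h1, ?_, h3⟩
    have := key_pow _ q _ (hδ0 (φ i)) h3 h2
    rw [hpd (φ i), dist_eq_norm] at this
    exact this.le
  have hqbk : ∀ k, 1 ≤ k → q ^ k < b ^ k := fun k hk => pow_lt_pow_left₀ hqb hq0.le (by omega)
  have hvlow : ∀ i, ‖y (φ i) - ystar‖ - q ^ (φ i) ≤ ‖v (φ i)‖ := by
    intro i
    have h := norm_sub_norm_le (y (φ i) - ystar) (y (φ i) - p (φ i))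
    rw [sub_sub_sub_cancel_left] at h
    have h2 := (hkey i).2.1
    simp only [hvdef]
    -- ‖p (φ i) - ystar‖ : note sub_sub_sub_cancel_left gives (y-ystar)-(y-p) ?
    linarith [h]
  have hvpos : ∀ i, 0 < ‖v (φ i)‖ := by
    intro i
    have h1 := (hkey i).1
    have h2 := hqbk _ (hkey i).2.2
    have h3 := hvlow i
    linarith
  set u : ℕ → EuclideanSpace ℝ (Fin n) := fun i => (‖v (φ i)‖:ℝ)⁻¹ • v (φ i) with hudef
  have hu1 : ∀ i, ‖u i‖ = 1 := by
    intro i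
    have : v (φ i) ≠ 0 := by
      intro h
      have := hvpos i
      rw [h] at this
      simp at this
    simpa [hudef] using norm_smul_inv_norm (𝕜 := ℝ) this
  have husphere : ∀ i, u i ∈ sphere (0 : EuclideanSpace ℝ (Fin n)) 1 := fun i =>
    mem_sphere_zero_iff_norm.2 (hu1 i)
  obtain ⟨w, hw, ψ, hψ, hψtend⟩ :=
    (isCompact_sphere (0 : EuclideanSpace ℝ (Fin n)) 1).tendsto_subseq husphere
  have hw1 : ‖w‖ = 1 := mem_sphere_zero_iff_norm.1 hw
  obtain ⟨z₀, hz₀⟩ := hCint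
  set D := ‖z₀ - ystar‖ with hDdef
  have hD0 : 0 ≤ D := norm_nonneg _
  -- choose the reference index i₀
  have hφψ_top : Tendsto (fun i => φ (ψ i)) atTop atTop := (hφ.comp hψ).tendsto_atTop
  have hnormuw : Tendsto (fun i => ‖u (ψ i) - w‖) atTop (𝓝 0) := by
    simpa using (hψtend.sub_const w).norm
  have hE_dsmall : ∀ᶠ i in atTop, ‖y (φ (ψ i)) - ystar‖ ≤ 1/4 :=
    hφψ_top.eventually (hd0.eventually (eventually_le_nhds (by norm_num)))
  have hE_qsmall : ∀ᶠ i in atTop, q ^ (φ (ψ i)) ≤ 1/4 :=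
    hφψ_top.eventually ((tendsto_pow_atTop_nhds_zero_of_lt_one hq0.le hq1).eventually
      (eventually_le_nhds (by norm_num)))
  have hE_uw8 : ∀ᶠ i in atTop, ‖u (ψ i) - w‖ ≤ 1/8 :=
    hnormuw.eventually (eventually_le_nhds (by norm_num))
  obtain ⟨i₀, hi₀d, hi₀q, hi₀u⟩ := (hE_dsmall.and (hE_qsmall.and hE_uw8)).exists
  set m := φ (ψ i₀) with hmdef
  have hvm_le : ‖v m‖ ≤ 1 := by
    have h := norm_sub_le (y m - ystar) (y m - p m)
    rw [sub_sub_sub_cancel_left] at h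
    have h2 := (hkey (ψ i₀)).2.1
    simp only [hvdef]
    calc ‖p m - ystar‖ ≤ ‖y m - ystar‖ + ‖y m - p m‖ := by
          have := norm_sub_le (p m - ystar) 0; 
          calc ‖p m - ystar‖ = ‖(y m - ystar) - (y m - p m)‖ := by rw [sub_sub_sub_cancel_left]
            _ ≤ ‖y m - ystar‖ + ‖y m - p m‖ := norm_sub_le _ _
      _ ≤ 1/4 + q ^ m := by
          have := (hkey (ψ i₀)).2.1
          simp only [← hmdef] at *
          linarith [hi₀d]
      _ ≤ 1 := by linarith [hi₀q]
  have hvm_pos : 0 < ‖v m‖ := hvpos (ψ i₀)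
  set lam := ‖v m‖ / (8 * (D + 1)) with hlamdef
  have hlam_pos : 0 < lam := div_pos hvm_pos (by linarith)
  have hlam_le : lam ≤ 1 := by
    rw [hlamdef, div_le_one (by linarith)]
    linarith
  set x := p m + lam • (z₀ - p m) with hxdef
  have hx_int : x ∈ interior C :=
    hCconv.add_smul_sub_mem_interior (hpC m) hz₀ ⟨hlam_pos, hlam_le⟩
  have hxy : x - ystar = v m + lam • (z₀ - p m) := by
    simp only [hxdef, hvdef]; abel
  have hzpm : ‖z₀ - p m‖ ≤ D + 1 := by
    calc ‖z₀ - p m‖ = ‖(z₀ - ystar) - (p m - ystar)‖ := by rw [sub_sub_sub_cancel_right]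
      _ ≤ ‖z₀ - ystar‖ + ‖p m - ystar‖ := norm_sub_le _ _
      _ ≤ D + 1 := by
          have : ‖p m - ystar‖ ≤ 1 := hvm_le
          simp only [hDdef]; linarith
  have hpert : ‖lam • (z₀ - p m)‖ ≤ ‖v m‖ / 8 := by
    rw [norm_smul, Real.norm_of_nonneg hlam_pos.le]
    calc lam * ‖z₀ - p m‖ ≤ lam * (D + 1) := by
          exact mul_le_mul_of_nonneg_left hzpm hlam_pos.le
      _ = ‖v m‖ / 8 := by rw [hlamdef]; field_simp
  set c := ‖x - ystar‖ with hcdef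
  have hc_low : 7/8 * ‖v m‖ ≤ c := by
    have h : ‖v m‖ ≤ ‖v m + lam • (z₀ - p m)‖ + ‖lam • (z₀ - p m)‖ := by
      calc ‖v m‖ = ‖(v m + lam • (z₀ - p m)) - lam • (z₀ - p m)‖ := by rw [add_sub_cancel_right]
        _ ≤ _ := norm_sub_le _ _
    rw [hcdef, hxy]
    linarith [hpert]
  have hc_up : c ≤ 9/8 * ‖v m‖ := by
    rw [hcdef, hxy]
    calc ‖v m + lam • (z₀ - p m)‖ ≤ ‖v m‖ + ‖lam • (z₀ - p m)‖ := norm_add_le _ _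
      _ ≤ 9/8 * ‖v m‖ := by linarith [hpert]
  have hc0 : 0 < c := lt_of_lt_of_le (by linarith) hc_low
  clear_value G L b q v u D m lam x c
  -- inner product estimate at the limit direction
  have hwum : (7:ℝ)/8 ≤ ⟪w, u (ψ i₀)⟫ := by
    have h1 : ⟪w, u (ψ i₀)⟫ = 1 + ⟪w, u (ψ i₀) - w⟫ := by
      rw [inner_sub_right]
      have : ⟪w, w⟫ = 1 := by
        rw [real_inner_self_eq_norm_sq, hw1]; norm_num
      rw [this]; ring
    have h2 : |⟪w, u (ψ i₀) - w⟫| ≤ ‖u (ψ i₀) - w‖ := by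
      have := abs_real_inner_le_norm w (u (ψ i₀) - w)
      rwa [hw1, one_mul] at this
    have h3 := (abs_le.1 h2).1
    rw [h1]
    linarith [hi₀u]
  have hvm_smul : v m = ‖v m‖ • u (ψ i₀) := by
    simp only [hudef, ← hmdef, smul_smul]
    rw [mul_inv_cancel₀ (ne_of_gt hvm_pos), one_smul]
  have hwx : 2/3 * c ≤ ⟪w, x - ystar⟫ := by
    have hA : ⟪w, v m⟫ = ‖v m‖ * ⟪w, u (ψ i₀)⟫ := by
      conv_lhs => rw [hvm_smul]
      rw [real_inner_smul_right]
    have hB : |⟪w, lam • (z₀ - p m)⟫| ≤ ‖v m‖ / 8 := by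
      have h := abs_real_inner_le_norm w (lam • (z₀ - p m))
      rw [hw1, one_mul] at h
      exact le_trans h hpert
    have h1 : ⟪w, x - ystar⟫ = ⟪w, v m⟫ + ⟪w, lam • (z₀ - p m)⟫ := by
      rw [hxy, inner_add_right]
    have h2 := (abs_le.1 hB).1
    have h3 : 3/4 * ‖v m‖ ≤ ⟪w, x - ystar⟫ := by
      rw [h1, hA]
      have h5 : ‖v m‖ * (7/8) ≤ ‖v m‖ * ⟪w, u (ψ i₀)⟫ :=
        mul_le_mul_of_nonneg_left hwum (norm_nonneg _)
      linarith
    have h6 : 2/3 * c ≤ 2/3 * (9/8 * ‖v m‖) := by linarith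
    linarith
  -- Fejér monotonicity towards x
  obtain ⟨N, hN⟩ := hF x hx_int
  have hmono : ∀ k, N ≤ k → ∀ j, ‖y (k + j) - x‖ ≤ ‖y k - x‖ := by
    intro k hk j
    induction j with
    | zero => simp
    | succ j ih =>
        have : ‖y ((k + j) + 1) - x‖ ≤ ‖y (k + j) - x‖ := hN (k + j) (by omega)
        calc ‖y (k + (j+1)) - x‖ = ‖y ((k + j) + 1) - x‖ := by ring_nf
          _ ≤ ‖y (k + j) - x‖ := this
          _ ≤ ‖y k - x‖ := ih
  have hstar : ∀ k, N ≤ k → c ≤ ‖y k - x‖ := by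
    intro k hk
    have h1 : Tendsto (fun j : ℕ => k + j) atTop atTop := by
      simpa [add_comm] using tendsto_add_atTop_nat k
    have ht : Tendsto (fun j => ‖y (k + j) - x‖) atTop (𝓝 ‖ystar - x‖) :=
      ((hconv.comp h1).sub_const x).norm
    have h2 : ‖ystar - x‖ ≤ ‖y k - x‖ :=
      le_of_tendsto ht (Eventually.of_forall fun j => hmono k hk j)
    rw [hcdef, ← norm_sub_rev]
    exact h2
  have hIP1 : ∀ k, N ≤ k → 2 * ⟪y k - ystar, x - ystar⟫ ≤ ‖y k - ystar‖ ^ 2 := by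
    intro k hk
    have h1 : ‖y k - x‖ ^ 2 =
        ‖y k - ystar‖ ^ 2 - 2 * ⟪y k - ystar, x - ystar⟫ + c ^ 2 := by
      rw [show y k - x = (y k - ystar) - (x - ystar) from (sub_sub_sub_cancel_right _ _ _).symm,
        norm_sub_sq_real, hcdef]
    have h2 : c ≤ ‖y k - x‖ := hstar k hk
    have h3 : c ^ 2 ≤ ‖y k - x‖ ^ 2 := pow_le_pow_left₀ hc0.le h2 2
    linarith
  -- final index
  have hE1 : ∀ᶠ i in atTop, ‖u (ψ i) - w‖ ≤ 1/6 :=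
    hnormuw.eventually (eventually_le_nhds (by norm_num))
  have hE2 : ∀ᶠ i in atTop, N ≤ φ (ψ i) := hφψ_top.eventually (eventually_ge_atTop N)
  have hE3 : ∀ᶠ i in atTop, ‖y (φ (ψ i)) - ystar‖ ≤ c/2 :=
    hφψ_top.eventually (hd0.eventually (eventually_le_nhds (by linarith)))
  have hE4 : ∀ᶠ i in atTop, 6 * q ^ (φ (ψ i)) < b ^ (φ (ψ i)) := by
    have h1 : Tendsto (fun k => (b/q)^k) atTop atTop :=
      tendsto_pow_atTop_atTop_of_one_lt (by rw [lt_div_iff₀ hq0]; linarith)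
    have h2 : ∀ᶠ k in atTop, 6 < (b/q)^k := h1.eventually_gt_atTop 6
    have h3 : ∀ᶠ k in atTop, 6 * q ^ k < b ^ k := by
      filter_upwards [h2] with k hk
      have hqk : 0 < q^k := pow_pos hq0 k
      rw [div_pow, lt_div_iff₀ hqk] at hk
      linarith
    exact hφψ_top.eventually h3
  obtain ⟨i, hi1, hi2, hi3, hi4⟩ := (hE1.and (hE2.and (hE3.and hE4))).exists
  -- derive the contradiction at index k = φ (ψ i)
  have hvk_low0 : ‖y (φ (ψ i)) - ystar‖ - q ^ (φ (ψ i)) ≤ ‖v (φ (ψ i))‖ := hvlow (ψ i)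
  have hvk_pos0 : 0 < ‖v (φ (ψ i))‖ := hvpos (ψ i)
  obtain ⟨hk1, hk2, hk3⟩ := hkey (ψ i)
  set k := φ (ψ i) with hkdef
  clear_value k
  have hA : ⟪y k - ystar, x - ystar⟫
      = ⟪v k, x - ystar⟫ + ⟪y k - p k, x - ystar⟫ := by
    rw [← inner_add_left]
    congr 1
    simp only [hvdef]
    abel
  have hvk_smul : v k = ‖v k‖ • u (ψ i) := by
    simp only [hudef, ← hkdef, smul_smul]
    rw [mul_inv_cancel₀ (ne_of_gt hvk_pos0), one_smul]
  have hC2 : c/2 ≤ ⟪u (ψ i), x - ystar⟫ := by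
    have h1 : ⟪u (ψ i), x - ystar⟫ = ⟪w, x - ystar⟫ + ⟪u (ψ i) - w, x - ystar⟫ := by
      rw [← inner_add_left]
      congr 1
      abel
    have h2 : |⟪u (ψ i) - w, x - ystar⟫| ≤ 1/6 * c := by
      have h := abs_real_inner_le_norm (u (ψ i) - w) (x - ystar)
      have h3 : ‖u (ψ i) - w‖ * ‖x - ystar‖ ≤ 1/6 * c := by
        rw [← hcdef]
        exact mul_le_mul_of_nonneg_right hi1 hc0.le |>.trans_eq rfl
      exact le_trans h h3
    have h4 := (abs_le.1 h2).1
    rw [h1]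
    linarith [hwx]
  have hB : ⟪v k, x - ystar⟫ = ‖v k‖ * ⟪u (ψ i), x - ystar⟫ := by
    conv_lhs => rw [hvk_smul]
    rw [real_inner_smul_left]
  have hD2 : -(q^k * c) ≤ ⟪y k - p k, x - ystar⟫ := by
    have h := abs_real_inner_le_norm (y k - p k) (x - ystar)
    have h2 : ‖y k - p k‖ * ‖x - ystar‖ ≤ q^k * c := by
      rw [← hcdef]
      exact mul_le_mul_of_nonneg_right hk2 hc0.le
    linarith [(abs_le.1 (h.trans h2)).1]
  have hIP := hIP1 k hi2
  have hvk_low : ‖y k - ystar‖ - q ^ k ≤ ‖v k‖ := hvk_low0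
  have hvk_nn : (0:ℝ) ≤ ‖v k‖ := norm_nonneg _
  have hmul : ‖v k‖ * (c/2) ≤ ‖v k‖ * ⟪u (ψ i), x - ystar⟫ :=
    mul_le_mul_of_nonneg_left hC2 hvk_nn
  have hdk_le : ‖y k - ystar‖ ≤ 6 * q ^ k := by
    have hqkpos : (0:ℝ) < q ^ k := pow_pos hq0 k
    -- 2*A ≤ d^2 ≤ (c/2)*d ; A ≥ ‖v‖*(c/2) - q^k*c ≥ (d - q^k)(c/2) - q^k c
    have hd2 : ‖y k - ystar‖ ^ 2 ≤ (c/2) * ‖y k - ystar‖ := by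
      rw [sq]
      exact mul_le_mul_of_nonneg_right hi3 (hdnn k)
    have s1 : (‖y k - ystar‖ - q^k) * (c/2) ≤ ‖v k‖ * (c/2) :=
      mul_le_mul_of_nonneg_right hvk_low (by positivity)
    have e1 : 2 * (⟪v k, x - ystar⟫ + ⟪y k - p k, x - ystar⟫) ≤ (c/2) * ‖y k - ystar‖ := by
      rw [← hA]
      linarith [hIP, hd2]
    have e3 : (‖y k - ystar‖ - q^k) * (c/2) ≤ ⟪v k, x - ystar⟫ := by
      rw [hB]
      exact le_trans s1 hmul
    set Bv : ℝ := ⟪v k, x - ystar⟫ with hBv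
    set Ee : ℝ := ⟪y k - p k, x - ystar⟫ with hEe
    set dd : ℝ := ‖y k - ystar‖ with hdd
    set qq : ℝ := q ^ k with hqq
    clear_value Bv Ee dd qq
    have t3 : dd * c ≤ 6 * qq * c := by linarith [e1, e3, hD2]
    exact le_of_mul_le_mul_right t3 hc0
  have : b ^ k < 6 * q ^ k := lt_of_lt_of_le hk1 hdk_le
  linarith [hi4]
end

section
/- Let x, v₁, …, v_m ∈ ℝⁿ, set w = (1/m) Σᵢ vᵢ, and consider the product space (ℝⁿ)^m with the Euclidean product norm ‖(z₁,…,z_m)‖² = Σᵢ ‖zᵢ‖². Define the points X = (x, …, x), Y = (x − 2v₁, …, x − 2v_m), Z = (x + 2v₁ − 4w, …, x + 2v_m − 4w), and for α ∈ ℝ, E(α) = (x − αw, …, x − αw). Then: (a) for every α ∈ ℝ one has ‖E(α) − Y‖ = ‖E(α) − Z‖; and (b) if w ≠ 0 and α* = ((1/m) Σᵢ ‖vᵢ‖²)/‖w‖², then ‖E(α*) − X‖ = ‖E(α*) − Y‖ = ‖E(α*) − Z‖, i.e. E(α*) is equidistant from the three points X, Y, Z. -/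
/-!
Every component of `E α - X`, `E α - Y` and `E α - Z` has the form `c • vᵢ - a • w`, and since `w` is the mean
of the `vᵢ`, `∑ᵢ ‖c • vᵢ - a • w‖² = c² ∑ᵢ ‖vᵢ‖² + m (a² - 2ca) ‖w‖²`. For `E α - Y` this is
`(c, a) = (2, α)` and for `E α - Z` it is `(-2, α - 4)`; both give `a² - 2ca = α² - 4α`.
For `E α - X` it is `(0, α)`, so `‖E α - X‖ = ‖E α - Y‖` reduces to `∑ᵢ ‖vᵢ‖² = m α ‖w‖²`,
which is the defining equation of `α*`.
-/

open Finset

section MeanDeviation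

variable {ι F : Type*} [Fintype ι] [NormedAddCommGroup F] [InnerProductSpace ℝ F]

lemma sum_eq_card_smul_of_eq_mean {v : ι → F} {w : F}
    (hw : w = (Fintype.card ι : ℝ)⁻¹ • ∑ i, v i) :
    ∑ i, v i = (Fintype.card ι : ℝ) • w := by
  rcases eq_or_ne (Fintype.card ι) 0 with hι | hι
  · have : IsEmpty ι := Fintype.card_eq_zero_iff.mp hι
    simp
  · rw [hw, smul_smul, mul_inv_cancel₀ (Nat.cast_ne_zero.mpr hι), one_smul]

lemma sum_inner_eq_card_mul_norm_sq_of_eq_mean {v : ι → F} {w : F}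
    (hw : w = (Fintype.card ι : ℝ)⁻¹ • ∑ i, v i) :
    ∑ i, (inner ℝ (v i) w : ℝ) = Fintype.card ι * ‖w‖ ^ 2 := by
  rw [← sum_inner, sum_eq_card_smul_of_eq_mean hw, real_inner_smul_left,
    real_inner_self_eq_norm_sq]

lemma sum_norm_sq_smul_sub_smul_mean {v : ι → F} {w : F}
    (hw : w = (Fintype.card ι : ℝ)⁻¹ • ∑ i, v i) (c a : ℝ) :
    ∑ i, ‖c • v i - a • w‖ ^ 2 =
      c ^ 2 * ∑ i, ‖v i‖ ^ 2 + Fintype.card ι * (a ^ 2 - 2 * c * a) * ‖w‖ ^ 2 := by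
  have expand : ∀ i, ‖c • v i - a • w‖ ^ 2 =
      c ^ 2 * ‖v i‖ ^ 2 - 2 * c * a * inner ℝ (v i) w + a ^ 2 * ‖w‖ ^ 2 := fun i => by
    rw [norm_sub_sq_real, norm_smul, norm_smul, real_inner_smul_left, real_inner_smul_right,
      mul_pow, mul_pow, Real.norm_eq_abs, Real.norm_eq_abs, sq_abs, sq_abs]
    ring
  simp only [expand, sum_add_distrib, sum_sub_distrib, ← mul_sum,
    sum_inner_eq_card_mul_norm_sq_of_eq_mean hw, sum_const, card_univ, nsmul_eq_mul]
  ring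

lemma norm_sq_toLp_sub_toLp_of_eq_mean {v : ι → F} {w : F}
    (hw : w = (Fintype.card ι : ℝ)⁻¹ • ∑ i, v i) {f g : ι → F} {c a : ℝ}
    (hfg : ∀ i, f i - g i = c • v i - a • w) :
    ‖WithLp.toLp 2 f - WithLp.toLp 2 g‖ ^ 2 =
      c ^ 2 * ∑ i, ‖v i‖ ^ 2 + Fintype.card ι * (a ^ 2 - 2 * c * a) * ‖w‖ ^ 2 := by
  rw [PiLp.norm_sq_eq_of_L2, ← sum_norm_sq_smul_sub_smul_mean hw]
  simp [hfg]

end MeanDeviation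

theorem stmt_7_general {n m : ℕ}
    (x : EuclideanSpace ℝ (Fin n))
    (v : Fin m → EuclideanSpace ℝ (Fin n))
    (w : EuclideanSpace ℝ (Fin n))
    (hw : w = (m : ℝ)⁻¹ • ∑ i, v i)
    (X Y Z : PiLp 2 fun _ : Fin m => EuclideanSpace ℝ (Fin n))
    (hX : X = WithLp.toLp 2 (fun _ => x))
    (hY : Y = WithLp.toLp 2 (fun i => x - (2 : ℝ) • v i))
    (hZ : Z = WithLp.toLp 2 (fun i => x + (2 : ℝ) • v i - (4 : ℝ) • w))
    (E : ℝ → PiLp 2 fun _ : Fin m => EuclideanSpace ℝ (Fin n))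
    (hE : ∀ α : ℝ, E α = WithLp.toLp 2 (fun _ => x - α • w)) :
    (∀ α : ℝ, ‖E α - Y‖ = ‖E α - Z‖) ∧
      (w ≠ 0 →
        ‖E (((m : ℝ)⁻¹ * ∑ i, ‖v i‖ ^ 2) / ‖w‖ ^ 2) - X‖ =
            ‖E (((m : ℝ)⁻¹ * ∑ i, ‖v i‖ ^ 2) / ‖w‖ ^ 2) - Y‖ ∧
          ‖E (((m : ℝ)⁻¹ * ∑ i, ‖v i‖ ^ 2) / ‖w‖ ^ 2) - Y‖ =
            ‖E (((m : ℝ)⁻¹ * ∑ i, ‖v i‖ ^ 2) / ‖w‖ ^ 2) - Z‖) := by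
  have hw' : w = (Fintype.card (Fin m) : ℝ)⁻¹ • ∑ i, v i := by rwa [Fintype.card_fin]
  have distX (α : ℝ) := norm_sq_toLp_sub_toLp_of_eq_mean hw' (c := 0) (a := α)
    (f := fun _ => x - α • w) (g := fun _ => x) fun _ => by module
  have distY (α : ℝ) := norm_sq_toLp_sub_toLp_of_eq_mean hw' (c := 2) (a := α)
    (f := fun _ => x - α • w) (g := fun i => x - (2 : ℝ) • v i) fun _ => by module
  have distZ (α : ℝ) := norm_sq_toLp_sub_toLp_of_eq_mean hw' (c := -2) (a := α - 4)
    (f := fun _ => x - α • w) (g := fun i => x + (2 : ℝ) • v i - (4 : ℝ) • w) fun _ => by module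
  simp only [← hX, ← hY, ← hZ, ← hE, Fintype.card_fin] at distX distY distZ
  simp only [← sq_eq_sq₀ (norm_nonneg _) (norm_nonneg _), distX, distY, distZ]
  refine ⟨fun α => by ring, fun hw0 => ⟨?_, by ring⟩⟩
  have hw_sq : ‖w‖ ^ 2 ≠ 0 := by positivity
  have hm : (m : ℝ) ≠ 0 := fun hm => hw0 (by simp [hw, hm])
  field_simp
  ring

theorem stmt_7 {n m : ℕ} (hm : 0 < m)
    (x : EuclideanSpace ℝ (Fin n))
    (v : Fin m → EuclideanSpace ℝ (Fin n))
    (w : EuclideanSpace ℝ (Fin n))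
    (hw : w = (m : ℝ)⁻¹ • ∑ i, v i)
    (X Y Z : PiLp 2 fun _ : Fin m => EuclideanSpace ℝ (Fin n))
    (hX : X = WithLp.toLp 2 (fun _ => x))
    (hY : Y = WithLp.toLp 2 (fun i => x - (2 : ℝ) • v i))
    (hZ : Z = WithLp.toLp 2 (fun i => x + (2 : ℝ) • v i - (4 : ℝ) • w))
    (E : ℝ → PiLp 2 fun _ : Fin m => EuclideanSpace ℝ (Fin n))
    (hE : ∀ α : ℝ, E α = WithLp.toLp 2 (fun _ => x - α • w)) :
    (∀ α : ℝ, ‖E α - Y‖ = ‖E α - Z‖) ∧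
      (w ≠ 0 →
        ‖E (((m : ℝ)⁻¹ * ∑ i, ‖v i‖ ^ 2) / ‖w‖ ^ 2) - X‖ =
            ‖E (((m : ℝ)⁻¹ * ∑ i, ‖v i‖ ^ 2) / ‖w‖ ^ 2) - Y‖ ∧
          ‖E (((m : ℝ)⁻¹ * ∑ i, ‖v i‖ ^ 2) / ‖w‖ ^ 2) - Y‖ =
            ‖E (((m : ℝ)⁻¹ * ∑ i, ‖v i‖ ^ 2) / ‖w‖ ^ 2) - Z‖) :=
  stmt_7_general x v w hw X Y Z hX hY hZ E hE
end

section
/- Assume the PACA setting with the Slater condition, and suppose the PACA sequence (xᵏ) is infinite (xᵏ ∉ C for all k). Then (xᵏ) is Fejér* monotone with respect to int(C), the interior of C: for every s ∈ int(C) there exists N(s) ∈ ℕ such that ‖xᵏ⁺¹ − s‖ ≤ ‖xᵏ − s‖ for all k ≥ N(s). -/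
open Filter
open scoped RealInnerProductSpace

/-! If `s ∈ int C`, the Slater point forces `fᵢ s < 0`, so `fᵢ s ≤ -ε_k` for all large `k`. From then
on the subgradient inequality at `xᵏ` gives `‖vᵢᵏ‖² ≤ ⟪vᵢᵏ, xᵏ - s⟫`; averaging over `i` yields
`α_k ‖wᵏ‖² ≤ ⟪wᵏ, xᵏ - s⟫`, and this is exactly what makes the step `xᵏ ↦ xᵏ - α_k wᵏ` not increase
the distance to `s`. -/

section InnerProductSpace

variable {E : Type*} [NormedAddCommGroup E] [InnerProductSpace ℝ E]

theorem norm_sq_le_inner_max_div_smul {u d : E} {c : ℝ} (hc : c ≤ ⟪u, d⟫) :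
    ‖(max 0 c / ‖u‖ ^ 2) • u‖ ^ 2 ≤ ⟪(max 0 c / ‖u‖ ^ 2) • u, d⟫ := by
  rcases le_total c 0 with hc0 | hc0
  · simp [max_eq_left hc0]
  rcases eq_or_ne u 0 with rfl | hu
  · simp
  rw [max_eq_right hc0]
  set t := c / ‖u‖ ^ 2
  have ht : 0 ≤ t := by positivity
  have htu : t * ‖u‖ ^ 2 = c := div_mul_cancel₀ _ (by positivity)
  calc ‖t • u‖ ^ 2 = t * c := by
        rw [norm_smul, Real.norm_eq_abs, abs_of_nonneg ht, ← htu]; ring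
    _ ≤ t * ⟪u, d⟫ := mul_le_mul_of_nonneg_left hc ht
    _ = ⟪t • u, d⟫ := (real_inner_smul_left _ _ _).symm

theorem mul_sum_norm_sq_le_inner_smul_sum {ι : Type*} {s : Finset ι} {v : ι → E} {d : E} {c : ℝ}
    (hc : 0 ≤ c) (hv : ∀ i ∈ s, ‖v i‖ ^ 2 ≤ ⟪v i, d⟫) :
    c * ∑ i ∈ s, ‖v i‖ ^ 2 ≤ ⟪c • ∑ i ∈ s, v i, d⟫ := by
  rw [real_inner_smul_left, sum_inner]
  exact mul_le_mul_of_nonneg_left (Finset.sum_le_sum hv) hc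

theorem norm_sub_div_smul_sub_le {x s w : E} {β : ℝ} (hβ : 0 ≤ β) (h : β ≤ ⟪w, x - s⟫) :
    ‖x - (β / ‖w‖ ^ 2) • w - s‖ ≤ ‖x - s‖ := by
  rcases eq_or_ne w 0 with rfl | hw
  · simp
  set α := β / ‖w‖ ^ 2
  have hα : 0 ≤ α := by positivity
  have hαw : α * ‖w‖ ^ 2 = β := div_mul_cancel₀ _ (by positivity)
  have hexpand : ‖x - α • w - s‖ ^ 2 = ‖x - s‖ ^ 2 - 2 * (α * ⟪w, x - s⟫) + α * β := by
    rw [sub_right_comm, norm_sub_sq_real, real_inner_smul_right, norm_smul, Real.norm_eq_abs,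
      mul_pow, sq_abs, real_inner_comm, ← hαw]
    ring
  have hle : α * β ≤ α * ⟪w, x - s⟫ := mul_le_mul_of_nonneg_left h hα
  have hnonneg : 0 ≤ α * β := mul_nonneg hα hβ
  refine (pow_le_pow_iff_left₀ (norm_nonneg _) (norm_nonneg _) two_ne_zero).1 ?_
  rw [hexpand]
  linarith

end InnerProductSpace

section Convex

variable {E : Type*} [NormedAddCommGroup E] [NormedSpace ℝ E]

theorem ConvexOn.neg_of_mem_interior_setOf_nonpos {g : E → ℝ} (hg : ConvexOn ℝ Set.univ g)
    {x₀ s : E} (hx₀ : g x₀ < 0) (hs : s ∈ interior {z | g z ≤ 0}) : g s < 0 := by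
  have hcont : Continuous fun t : ℝ => s + t • (s - x₀) := by fun_prop
  have hnhds : ∀ᶠ t in nhds (0 : ℝ), g (s + t • (s - x₀)) ≤ 0 := by
    have := hcont.tendsto 0
    simp only [zero_smul, add_zero] at this
    exact this.eventually (mem_interior_iff_mem_nhds.1 hs)
  obtain ⟨t, hgy, ht⟩ := ((hnhds.filter_mono nhdsWithin_le_nhds).and
    (self_mem_nhdsWithin : ∀ᶠ t in nhdsWithin (0 : ℝ) (Set.Ioi 0), 0 < t)).exists
  -- `s` is a proper convex combination of `x₀` and the point `s + t • (s - x₀)` of the sublevel set.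
  have h1t : 0 < 1 + t := by linarith
  have hcomb : (1 / (1 + t)) • (s + t • (s - x₀)) + (t / (1 + t)) • x₀ = s := by
    match_scalars <;> grind
  have hconv := hg.2 (Set.mem_univ (s + t • (s - x₀))) (Set.mem_univ x₀)
    (by positivity : (0 : ℝ) ≤ 1 / (1 + t)) (by positivity : (0 : ℝ) ≤ t / (1 + t))
    (by field_simp)
  rw [hcomb, smul_eq_mul, smul_eq_mul] at hconv
  have : 0 < t / (1 + t) := by positivity
  nlinarith [div_pos one_pos h1t]

end Convex

theorem stmt_8_general {n m : ℕ}
    (f : Fin m → EuclideanSpace ℝ (Fin n) → ℝ)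
    (hconv : ∀ i, ConvexOn ℝ Set.univ (f i))
    (xhat : EuclideanSpace ℝ (Fin n)) (hslater : ∀ i, f i xhat < 0)
    (ε : ℕ → ℝ)
    (hεlim : Tendsto ε atTop (nhds 0))
    (x : ℕ → EuclideanSpace ℝ (Fin n))
    (u v : Fin m → ℕ → EuclideanSpace ℝ (Fin n))
    (w : ℕ → EuclideanSpace ℝ (Fin n))
    (hsub : ∀ i k, ∀ z, f i (x k) + ⟪u i k, z - x k⟫ ≤ f i z)
    (hv : ∀ i k, v i k = (max 0 (f i (x k) + ε k) / ‖u i k‖ ^ 2) • u i k)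
    (hw : ∀ k, w k = (m : ℝ)⁻¹ • ∑ i, v i k)
    (hstep0 : ∀ k, w k = 0 → x (k + 1) = x k)
    (hstep : ∀ k, w k ≠ 0 →
      x (k + 1) = x k - (((m : ℝ)⁻¹ * ∑ i, ‖v i k‖ ^ 2) / ‖w k‖ ^ 2) • w k) :
    ∀ s ∈ interior {z : EuclideanSpace ℝ (Fin n) | ∀ i, f i z ≤ 0},
      ∃ N : ℕ, ∀ k ≥ N, ‖x (k + 1) - s‖ ≤ ‖x k - s‖ := by
  intro s hs
  have hfs (i : Fin m) : f i s < 0 :=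
    (hconv i).neg_of_mem_interior_setOf_nonpos (hslater i)
      (interior_mono (fun (z : EuclideanSpace ℝ (Fin n)) (hz : ∀ j, f j z ≤ 0) => hz i) hs)
  obtain ⟨N, hN⟩ := eventually_atTop.1 <|
    eventually_all.2 fun i => hεlim.eventually (gt_mem_nhds (neg_pos.2 (hfs i)))
  refine ⟨N, fun k hk => ?_⟩
  have hv_le : ∀ i ∈ Finset.univ, ‖v i k‖ ^ 2 ≤ ⟪v i k, x k - s⟫ := fun i _ => by
    rw [hv]
    refine norm_sq_le_inner_max_div_smul ?_
    have hsub_s := hsub i k s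
    rw [← neg_sub, inner_neg_right] at hsub_s
    linarith [hN k hk i]
  by_cases hwk : w k = 0
  · rw [hstep0 k hwk]
  · rw [hstep k hwk]
    refine norm_sub_div_smul_sub_le (by positivity) ?_
    rw [hw k]
    exact mul_sum_norm_sq_le_inner_smul_sum (by positivity) hv_le

theorem stmt_8 {n m : ℕ} (hm : 0 < m)
    (f : Fin m → EuclideanSpace ℝ (Fin n) → ℝ)
    (hconv : ∀ i, ConvexOn ℝ Set.univ (f i))
    (xhat : EuclideanSpace ℝ (Fin n)) (hslater : ∀ i, f i xhat < 0)
    (ε : ℕ → ℝ) (hεpos : ∀ k, 0 < ε k) (hεanti : StrictAnti ε)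
    (hεlim : Tendsto ε atTop (nhds 0))
    (x : ℕ → EuclideanSpace ℝ (Fin n))
    (u v : Fin m → ℕ → EuclideanSpace ℝ (Fin n))
    (w : ℕ → EuclideanSpace ℝ (Fin n))
    (hsub : ∀ i k, ∀ z, f i (x k) + ⟪u i k, z - x k⟫ ≤ f i z)
    (hune : ∀ i k, 0 < f i (x k) + ε k → u i k ≠ 0)
    (hv : ∀ i k, v i k = (max 0 (f i (x k) + ε k) / ‖u i k‖ ^ 2) • u i k)
    (hw : ∀ k, w k = (m : ℝ)⁻¹ • ∑ i, v i k)
    (hstep0 : ∀ k, w k = 0 → x (k + 1) = x k)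
    (hstep : ∀ k, w k ≠ 0 →
      x (k + 1) = x k - (((m : ℝ)⁻¹ * ∑ i, ‖v i k‖ ^ 2) / ‖w k‖ ^ 2) • w k)
    (hinfinite : ∀ k, ∃ i, 0 < f i (x k)) :
    ∀ s ∈ interior {z : EuclideanSpace ℝ (Fin n) | ∀ i, f i z ≤ 0},
      ∃ N : ℕ, ∀ k ≥ N, ‖x (k + 1) - s‖ ≤ ‖x k - s‖ :=
  stmt_8_general f hconv xhat hslater ε hεlim x u v w hsub hv hw hstep0 hstep
end

section
/- Assume the PACA setting with the Slater condition, and suppose the PACA sequence (xᵏ) is infinite (xᵏ ∉ C for all k). Then the consecutive differences vanish: lim_{k→∞} ‖xᵏ⁺¹ − xᵏ‖ = 0. -/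
open Filter
open scoped RealInnerProductSpace

theorem stmt_9 {n m : ℕ} (hm : 0 < m)
    (f : Fin m → EuclideanSpace ℝ (Fin n) → ℝ)
    (hconv : ∀ i, ConvexOn ℝ Set.univ (f i))
    (xhat : EuclideanSpace ℝ (Fin n)) (hslater : ∀ i, f i xhat < 0)
    (ε : ℕ → ℝ) (hεpos : ∀ k, 0 < ε k) (hεanti : StrictAnti ε)
    (hεlim : Tendsto ε atTop (nhds 0))
    (x : ℕ → EuclideanSpace ℝ (Fin n))
    (u v : Fin m → ℕ → EuclideanSpace ℝ (Fin n))
    (w : ℕ → EuclideanSpace ℝ (Fin n))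
    (hsub : ∀ i k, ∀ z, f i (x k) + ⟪u i k, z - x k⟫ ≤ f i z)
    (hune : ∀ i k, 0 < f i (x k) + ε k → u i k ≠ 0)
    (hv : ∀ i k, v i k = (max 0 (f i (x k) + ε k) / ‖u i k‖ ^ 2) • u i k)
    (hw : ∀ k, w k = (m : ℝ)⁻¹ • ∑ i, v i k)
    (hstep0 : ∀ k, w k = 0 → x (k + 1) = x k)
    (hstep : ∀ k, w k ≠ 0 →
      x (k + 1) = x k - (((m : ℝ)⁻¹ * ∑ i, ‖v i k‖ ^ 2) / ‖w k‖ ^ 2) • w k)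
    (hinfinite : ∀ k, ∃ i, 0 < f i (x k)) :
    Tendsto (fun k => ‖x (k + 1) - x k‖) atTop (nhds 0) := by
  -- Key Fejér inequality
  have key : ∀ k, (∀ i, f i xhat + ε k ≤ 0) →
      ‖x (k+1) - x k‖^2 ≤ ‖x k - xhat‖^2 - ‖x (k+1) - xhat‖^2 := by
    intro k hk
    by_cases hwz : w k = 0
    · rw [hstep0 k hwz]; simp
    · have hinner : ∀ i, ‖v i k‖^2 ≤ ⟪v i k, x k - xhat⟫ := by
        intro i
        by_cases hc : f i (x k) + ε k ≤ 0
        · have hv0 : v i k = 0 := by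
            rw [hv i k, max_eq_left hc]; simp
          simp [hv0]
        · push_neg at hc
          have hu := hune i k hc
          have hun : (0:ℝ) < ‖u i k‖ := norm_pos_iff.mpr hu
          have hs2 : (0:ℝ) < ‖u i k‖^2 := by positivity
          have hmax : max 0 (f i (x k) + ε k) = f i (x k) + ε k := max_eq_right hc.le
          have hsub' := hsub i k xhat
          have h2' : ⟪u i k, x k - xhat⟫ = -⟪u i k, xhat - x k⟫ := by
            rw [← neg_sub, inner_neg_right]
          have h2 : f i (x k) + ε k ≤ ⟪u i k, x k - xhat⟫ := by
            rw [h2']; have := hk i; linarith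
          set t := f i (x k) + ε k with ht
          set s := ‖u i k‖^2 with hs
          have ht' : (0:ℝ) ≤ t / s := div_nonneg hc.le hs2.le
          rw [hv i k, hmax, real_inner_smul_left]
          have hnv : ‖(t / s) • u i k‖^2 = (t/s)^2 * s := by
            rw [norm_smul, mul_pow, Real.norm_eq_abs, sq_abs, hs]
          rw [hnv]
          have hq : (t/s) * s = t := div_mul_cancel₀ _ hs2.ne'
          calc (t/s)^2 * s = (t/s) * ((t/s)*s) := by ring
            _ = (t/s) * t := by rw [hq]
            _ ≤ (t/s) * ⟪u i k, x k - xhat⟫ := mul_le_mul_of_nonneg_left h2 ht'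
      set S := (m:ℝ)⁻¹ * ∑ i, ‖v i k‖^2 with hS
      have hS0 : 0 ≤ S := by positivity
      have hwS : S ≤ ⟪w k, x k - xhat⟫ := by
        rw [hw k, real_inner_smul_left, sum_inner]
        exact mul_le_mul_of_nonneg_left (Finset.sum_le_sum fun i _ => hinner i)
          (by positivity)
      have hwn : (0:ℝ) < ‖w k‖^2 := pow_pos (norm_pos_iff.mpr hwz) 2
      set α := S / ‖w k‖^2 with hα
      have hα0 : 0 ≤ α := div_nonneg hS0 hwn.le
      have hαw : α * ‖w k‖^2 = S := div_mul_cancel₀ _ hwn.ne'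
      have hd : x (k+1) - x k = -(α • w k) := by rw [hstep k hwz]; abel
      have hd2 : ‖x (k+1) - x k‖^2 = α^2 * ‖w k‖^2 := by
        rw [hd, norm_neg, norm_smul, mul_pow, Real.norm_eq_abs, sq_abs]
      have he : x (k+1) - xhat = (x k - xhat) - α • w k := by
        rw [hstep k hwz]; abel
      have he2 : ‖x (k+1) - xhat‖^2
          = ‖x k - xhat‖^2 - 2 * (α * ⟪w k, x k - xhat⟫) + α^2 * ‖w k‖^2 := by
        rw [he, norm_sub_sq_real, real_inner_smul_right, real_inner_comm,
          norm_smul, mul_pow, Real.norm_eq_abs, sq_abs]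
      rw [hd2, he2]
      nlinarith [mul_le_mul_of_nonneg_left hwS hα0]
  -- Eventually the Slater point is ε-deep
  have hev : ∀ᶠ k in atTop, ∀ i, f i xhat + ε k ≤ 0 := by
    rw [eventually_all]
    intro i
    have : ∀ᶠ k in atTop, ε k < -(f i xhat) :=
      hεlim.eventually_lt_const (by linarith [hslater i])
    filter_upwards [this] with k hk
    linarith
  obtain ⟨K, hK⟩ := eventually_atTop.mp hev
  set a : ℕ → ℝ := fun k => ‖x k - xhat‖^2 with ha
  set b : ℕ → ℝ := fun j => a (K + j) with hb
  have hanti : Antitone b := by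
    apply antitone_nat_of_succ_le
    intro j
    have h := key (K + j) (hK (K + j) (Nat.le_add_right _ _))
    have h0 : (0:ℝ) ≤ ‖x (K + j + 1) - x (K + j)‖^2 := by positivity
    simp only [hb, ha]
    have : K + (j + 1) = K + j + 1 := by ring
    rw [this]
    linarith
  have hbdd : BddBelow (Set.range b) := ⟨0, fun y ⟨j, hj⟩ => hj ▸ by positivity⟩
  have hbt : Tendsto b atTop (nhds (⨅ j, b j)) := tendsto_atTop_ciInf hanti hbdd
  have hdiff : Tendsto (fun j => b j - b (j+1)) atTop (nhds 0) := by
    have h1 : Tendsto (fun j => b (j+1)) atTop (nhds (⨅ j, b j)) :=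
      hbt.comp (tendsto_add_atTop_nat 1)
    have := hbt.sub h1
    simpa using this
  have hsq : Tendsto (fun j => ‖x (K + j + 1) - x (K + j)‖^2) atTop (nhds 0) := by
    apply squeeze_zero (fun j => by positivity)
    · intro j
      have h := key (K + j) (hK (K + j) (Nat.le_add_right _ _))
      show ‖x (K + j + 1) - x (K + j)‖^2 ≤ a (K + j) - a (K + (j+1))
      have e1 : a (K + j) = ‖x (K + j) - xhat‖^2 := rfl
      have e2 : a (K + (j+1)) = ‖x (K + j + 1) - xhat‖^2 := by
        rfl
      linarith
    · exact hdiff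
  have hnorm : Tendsto (fun j => ‖x (K + j + 1) - x (K + j)‖) atTop (nhds 0) := by
    have h := (Real.continuous_sqrt.tendsto 0).comp hsq
    simp only [Function.comp_def, Real.sqrt_zero] at h
    convert h using 2 with j
    rw [Real.sqrt_sq (norm_nonneg _)]
  rw [← tendsto_add_atTop_iff_nat K]
  convert hnorm using 2 with j
  rw [add_comm j K]
end

section
/- Assume the PACA setting with the Slater condition, and suppose the PACA sequence (xᵏ) is infinite (xᵏ ∉ C for all k). Then every cluster point x̄ of (xᵏ) (i.e. every limit of a convergent subsequence) belongs to C, that is, fᵢ(x̄) ≤ 0 for all i = 1,…,m. -/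
open Filter
open scoped RealInnerProductSpace

theorem stmt_10 {n m : ℕ} (hm : 0 < m)
    (f : Fin m → EuclideanSpace ℝ (Fin n) → ℝ)
    (hconv : ∀ i, ConvexOn ℝ Set.univ (f i))
    (xhat : EuclideanSpace ℝ (Fin n)) (hslater : ∀ i, f i xhat < 0)
    (ε : ℕ → ℝ) (hεpos : ∀ k, 0 < ε k) (hεanti : StrictAnti ε)
    (hεlim : Tendsto ε atTop (nhds 0))
    (x : ℕ → EuclideanSpace ℝ (Fin n))
    (u v : Fin m → ℕ → EuclideanSpace ℝ (Fin n))
    (w : ℕ → EuclideanSpace ℝ (Fin n))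
    (hsub : ∀ i k, ∀ z, f i (x k) + ⟪u i k, z - x k⟫ ≤ f i z)
    (hune : ∀ i k, 0 < f i (x k) + ε k → u i k ≠ 0)
    (hv : ∀ i k, v i k = (max 0 (f i (x k) + ε k) / ‖u i k‖ ^ 2) • u i k)
    (hw : ∀ k, w k = (m : ℝ)⁻¹ • ∑ i, v i k)
    (hstep0 : ∀ k, w k = 0 → x (k + 1) = x k)
    (hstep : ∀ k, w k ≠ 0 →
      x (k + 1) = x k - (((m : ℝ)⁻¹ * ∑ i, ‖v i k‖ ^ 2) / ‖w k‖ ^ 2) • w k)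
    (hinfinite : ∀ k, ∃ i, 0 < f i (x k)) :
    ∀ xbar : EuclideanSpace ℝ (Fin n),
      (∃ φ : ℕ → ℕ, StrictMono φ ∧ Tendsto (fun j => x (φ j)) atTop (nhds xbar)) →
        ∀ i, f i xbar ≤ 0 := by
  haveI hne : Nonempty (Fin m) := Fin.pos_iff_nonempty.mp hm
  have hmR : (0:ℝ) < m := by exact_mod_cast hm
  have hcont : ∀ i, Continuous (f i) := fun i =>
    continuousOn_univ.mp ((hconv i).continuousOn isOpen_univ)
  -- Slater margin
  set δ : ℝ := Finset.univ.inf' Finset.univ_nonempty (fun i => -(f i xhat)) with hδdef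
  have hδpos : 0 < δ := by
    rw [hδdef, Finset.lt_inf'_iff]
    intro i _
    linarith [hslater i]
  have hδle : ∀ i, f i xhat ≤ -δ := by
    intro i
    have := Finset.inf'_le (fun i => -(f i xhat)) (Finset.mem_univ i)
    rw [← hδdef] at this
    linarith
  -- Per-step quantities
  set s : ℕ → ℝ := fun k => (m : ℝ)⁻¹ * ∑ i, ‖v i k‖ ^ 2 with hsdef
  have hsnn : ∀ k, 0 ≤ s k := by
    intro k
    apply mul_nonneg (by positivity)
    exact Finset.sum_nonneg fun i _ => sq_nonneg _
  -- key per-coordinate inequality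
  have hvineq : ∀ k, ε k ≤ δ → ∀ i, ‖v i k‖ ^ 2 ≤ ⟪v i k, x k - xhat⟫ := by
    intro k hk i
    rcases le_or_gt (f i (x k) + ε k) 0 with h | h
    · have hv0 : v i k = 0 := by rw [hv, max_eq_left h]; simp
      simp [hv0]
    · have hu := hune i k h
      have hun : (0:ℝ) < ‖u i k‖ := norm_pos_iff.mpr hu
      set c : ℝ := (f i (x k) + ε k) / ‖u i k‖ ^ 2 with hc
      have hcpos : 0 < c := div_pos h (by positivity)
      have hvik : v i k = c • u i k := by rw [hv, max_eq_right h.le]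
      have hinner : f i (x k) + ε k ≤ ⟪u i k, x k - xhat⟫ := by
        have h1 := hsub i k xhat
        rw [show xhat - x k = -(x k - xhat) by abel, inner_neg_right] at h1
        have := hδle i
        linarith
      have hnv : ‖v i k‖ ^ 2 = c * (f i (x k) + ε k) := by
        rw [hvik, norm_smul, mul_pow, Real.norm_eq_abs, sq_abs, hc]
        field_simp
      have hiv : ⟪v i k, x k - xhat⟫ = c * ⟪u i k, x k - xhat⟫ := by
        rw [hvik, real_inner_smul_left]
      rw [hnv, hiv]
      exact mul_le_mul_of_nonneg_left hinner hcpos.le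
  -- inner product with w
  have hwin : ∀ k, ε k ≤ δ → s k ≤ ⟪w k, x k - xhat⟫ := by
    intro k hk
    rw [hw, real_inner_smul_left, sum_inner]
    refine mul_le_mul_of_nonneg_left ?_ (by positivity)
    exact Finset.sum_le_sum fun i _ => hvineq k hk i
  -- Fejér-type decrease
  have hdec : ∀ k, ε k ≤ δ → ‖x (k + 1) - xhat‖ ^ 2 + s k ≤ ‖x k - xhat‖ ^ 2 := by
    intro k hk
    by_cases hwz : w k = 0
    · have h1 := hwin k hk
      rw [hwz] at h1
      simp only [inner_zero_left] at h1
      have hs0 : s k = 0 := le_antisymm h1 (hsnn k)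
      rw [hstep0 k hwz, hs0]
      simp
    · have hwpos : (0:ℝ) < ‖w k‖ ^ 2 := pow_pos (norm_pos_iff.mpr hwz) 2
      -- ‖w k‖² ≤ s k
      have hws : ‖w k‖ ^ 2 ≤ s k := by
        have h1 : ‖w k‖ ≤ (m:ℝ)⁻¹ * ∑ i, ‖v i k‖ := by
          rw [hw, norm_smul]
          simp only [norm_inv, Real.norm_natCast]
          exact mul_le_mul_of_nonneg_left (norm_sum_le _ _) (by positivity)
        have h2 : (∑ i, ‖v i k‖) ^ 2 ≤ (m:ℝ) * ∑ i, ‖v i k‖ ^ 2 := by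
          have := sq_sum_le_card_mul_sum_sq (s := (Finset.univ : Finset (Fin m)))
            (f := fun i => ‖v i k‖)
          simpa using this
        have h3 : ‖w k‖ ^ 2 ≤ ((m:ℝ)⁻¹ * ∑ i, ‖v i k‖) ^ 2 :=
          pow_le_pow_left₀ (norm_nonneg _) h1 2
        calc ‖w k‖ ^ 2 ≤ ((m:ℝ)⁻¹ * ∑ i, ‖v i k‖) ^ 2 := h3
          _ = (m:ℝ)⁻¹ ^ 2 * (∑ i, ‖v i k‖) ^ 2 := by ring
          _ ≤ (m:ℝ)⁻¹ ^ 2 * ((m:ℝ) * ∑ i, ‖v i k‖ ^ 2) :=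
              mul_le_mul_of_nonneg_left h2 (by positivity)
          _ = s k := by rw [hsdef]; field_simp
      set W : ℝ := ‖w k‖ ^ 2 with hW
      set I : ℝ := ⟪x k - xhat, w k⟫ with hI
      have hIs : s k ≤ I := by rw [hI, real_inner_comm]; exact hwin k hk
      have hα : ((m : ℝ)⁻¹ * ∑ i, ‖v i k‖ ^ 2) / ‖w k‖ ^ 2 = s k / W := by rw [hsdef]
      rw [hstep k hwz, hα, show x k - (s k / W) • w k - xhat = (x k - xhat) - (s k / W) • w k by abel]
      rw [norm_sub_sq_real, real_inner_smul_right, norm_smul]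
      have habs : |s k / W| = s k / W := abs_of_nonneg (div_nonneg (hsnn k) hwpos.le)
      simp only [Real.norm_eq_abs, habs]
      rw [mul_pow, ← hI, ← hW]
      have hWpos : 0 < W := hwpos
      have key : s k + (s k / W) ^ 2 * W ≤ 2 * (s k / W * I) := by
        have h4 : s k * W + s k ^ 2 ≤ 2 * (s k * I) := by
          nlinarith [mul_le_mul_of_nonneg_left hIs (hsnn k),
            mul_le_mul_of_nonneg_left hws (hsnn k)]
        have h5 : (s k / W) ^ 2 * W = s k ^ 2 / W := by field_simp
        have h6 : s k = s k * W / W := by field_simp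
        rw [h5]
        calc s k + s k ^ 2 / W = (s k * W + s k ^ 2) / W := by field_simp
          _ ≤ 2 * (s k * I) / W := div_le_div_of_nonneg_right h4 hWpos.le
          _ = 2 * (s k / W * I) := by ring
      nlinarith [key]
  -- obtain K with ε k ≤ δ for k ≥ K
  obtain ⟨K, hK⟩ : ∃ K, ∀ k ≥ K, ε k ≤ δ := by
    have := hεlim.eventually_lt_const hδpos
    rw [eventually_atTop] at this
    obtain ⟨K, hK⟩ := this
    exact ⟨K, fun k hk => (hK k hk).le⟩
  -- d converges, hence s → 0
  set d : ℕ → ℝ := fun k => ‖x k - xhat‖ ^ 2 with hddef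
  set D : ℕ → ℝ := fun j => d (K + j) with hDdef
  have hDstep : ∀ j, D (j + 1) + s (K + j) ≤ D j := by
    intro j
    have := hdec (K + j) (hK _ (Nat.le_add_right _ _))
    simpa [hDdef, hddef, Nat.add_assoc] using this
  have hDanti : Antitone D :=
    antitone_nat_of_succ_le fun j => by linarith [hDstep j, hsnn (K + j)]
  have hDbdd : BddBelow (Set.range D) := by
    refine ⟨0, ?_⟩
    rintro _ ⟨j, rfl⟩
    exact sq_nonneg _
  have hDlim : Tendsto D atTop (nhds (⨅ j, D j)) := tendsto_atTop_ciInf hDanti hDbdd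
  have hDlim' : Tendsto (fun j => D (j + 1)) atTop (nhds (⨅ j, D j)) :=
    (tendsto_add_atTop_iff_nat 1).mpr hDlim
  have hdiff : Tendsto (fun j => D j - D (j + 1)) atTop (nhds 0) := by
    have := hDlim.sub hDlim'
    simpa using this
  have hsK : Tendsto (fun j => s (K + j)) atTop (nhds 0) := by
    apply tendsto_of_tendsto_of_tendsto_of_le_of_le tendsto_const_nhds hdiff
    · exact fun j => hsnn _
    · intro j
      show s (K + j) ≤ D j - D (j + 1)
      linarith [hDstep j]
  have hstend : Tendsto s atTop (nhds 0) := by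
    have : (fun j => s (K + j)) = fun j => s (j + K) := funext fun j => by rw [Nat.add_comm]
    rw [this] at hsK
    exact (tendsto_add_atTop_iff_nat K).mp hsK
  -- each ‖v i ·‖ → 0
  have hvtend : ∀ i, Tendsto (fun k => ‖v i k‖) atTop (nhds 0) := by
    intro i
    have hms : Tendsto (fun k => (m:ℝ) * s k) atTop (nhds 0) := by
      simpa using hstend.const_mul (m:ℝ)
    have hsq : Tendsto (fun k => ‖v i k‖ ^ 2) atTop (nhds 0) := by
      apply tendsto_of_tendsto_of_tendsto_of_le_of_le tendsto_const_nhds hms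
      · exact fun k => sq_nonneg _
      · intro k
        have h1 : ‖v i k‖ ^ 2 ≤ ∑ j, ‖v j k‖ ^ 2 :=
          Finset.single_le_sum (f := fun j => ‖v j k‖ ^ 2) (fun j _ => sq_nonneg _) (Finset.mem_univ i)
        have h2 : (m:ℝ) * s k = ∑ j, ‖v j k‖ ^ 2 := by
          rw [hsdef]; field_simp
        show ‖v i k‖ ^ 2 ≤ (m:ℝ) * s k
        rw [h2]
        exact h1
    have h2 := (Real.continuous_sqrt.tendsto 0).comp hsq
    rw [Real.sqrt_zero] at h2
    exact h2.congr fun k => Real.sqrt_sq (norm_nonneg _)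
  -- main conclusion
  rintro xbar ⟨φ, hφ, hg⟩ i
  set g : ℕ → EuclideanSpace ℝ (Fin n) := fun j => x (φ j) with hgdef
  -- bound on f i on closed ball
  obtain ⟨ymax, hymem, hymax⟩ := (isCompact_closedBall xbar 2).exists_isMaxOn
    ⟨xbar, Metric.mem_closedBall_self (by norm_num)⟩ (hcont i).continuousOn
  set A : ℝ := f i ymax with hA
  have hAxbar : f i xbar ≤ A := hymax (Metric.mem_closedBall_self (by norm_num))
  set M : ℝ := A - f i xbar + 1 with hM
  have hMpos : 0 < M := by rw [hM]; linarith
  -- eventual facts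
  have hev1 : ∀ᶠ j in atTop, ‖g j - xbar‖ ≤ 1 := by
    have := hg.eventually (Metric.closedBall_mem_nhds xbar (by norm_num : (0:ℝ) < 1))
    filter_upwards [this] with j hj
    simpa [Metric.mem_closedBall, dist_eq_norm] using hj
  have hfgt : Tendsto (fun j => f i (g j)) atTop (nhds (f i xbar)) :=
    ((hcont i).tendsto xbar).comp hg
  have hev2 : ∀ᶠ j in atTop, f i xbar - 1 ≤ f i (g j) := by
    have := hfgt.eventually_const_lt (show f i xbar - 1 < f i xbar by linarith)
    filter_upwards [this] with j hj
    exact hj.le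
  have hev3 : ∀ᶠ j in atTop, max 0 (f i (g j) + ε (φ j)) ≤ M * ‖v i (φ j)‖ := by
    filter_upwards [hev1, hev2] with j hj1 hj2
    rcases le_or_gt (f i (g j) + ε (φ j)) 0 with h | h
    · rw [max_eq_left h]
      positivity
    · rw [max_eq_right h.le]
      have hu : u i (φ j) ≠ 0 := hune i (φ j) h
      have hun : (0:ℝ) < ‖u i (φ j)‖ := norm_pos_iff.mpr hu
      -- bound ‖u‖ ≤ M
      have hub : ‖u i (φ j)‖ ≤ M := by
        set e : EuclideanSpace ℝ (Fin n) := ‖u i (φ j)‖⁻¹ • u i (φ j) with he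
        have hee : ‖e‖ = 1 := by
          rw [he, norm_smul, norm_inv, norm_norm, inv_mul_cancel₀ hun.ne']
        have hie : ⟪u i (φ j), e⟫ = ‖u i (φ j)‖ := by
          rw [he, real_inner_smul_right, real_inner_self_eq_norm_sq]
          field_simp
        have hsb := hsub i (φ j) (g j + e)
        rw [show g j + e - x (φ j) = e by rw [hgdef]; abel] at hsb
        have hball : g j + e ∈ Metric.closedBall xbar 2 := by
          rw [Metric.mem_closedBall, dist_eq_norm]
          calc ‖g j + e - xbar‖ = ‖(g j - xbar) + e‖ := by congr 1; abel
            _ ≤ ‖g j - xbar‖ + ‖e‖ := norm_add_le _ _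
            _ ≤ 1 + 1 := by rw [hee]; linarith
            _ = 2 := by norm_num
        have hfa : f i (g j + e) ≤ A := hymax hball
        rw [hie] at hsb
        rw [hM]
        have : f i (x (φ j)) = f i (g j) := by rw [hgdef]
        rw [this] at hsb
        linarith
      have hnv : ‖v i (φ j)‖ = (f i (g j) + ε (φ j)) / ‖u i (φ j)‖ := by
        rw [hv, norm_smul]
        rw [show f i (x (φ j)) = f i (g j) from by rw [hgdef]]
        rw [max_eq_right h.le, Real.norm_eq_abs,
          abs_of_nonneg (by positivity : (0:ℝ) ≤ (f i (g j) + ε (φ j)) / ‖u i (φ j)‖ ^ 2)]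
        field_simp
      have : f i (g j) + ε (φ j) = ‖v i (φ j)‖ * ‖u i (φ j)‖ := by
        rw [hnv]; field_simp
      rw [this]
      calc ‖v i (φ j)‖ * ‖u i (φ j)‖ ≤ ‖v i (φ j)‖ * M :=
            mul_le_mul_of_nonneg_left hub (norm_nonneg _)
        _ = M * ‖v i (φ j)‖ := mul_comm _ _
  -- limits
  have hvφ : Tendsto (fun j => ‖v i (φ j)‖) atTop (nhds 0) :=
    (hvtend i).comp hφ.tendsto_atTop
  have hMv : Tendsto (fun j => M * ‖v i (φ j)‖) atTop (nhds 0) := by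
    have := hvφ.const_mul M
    simpa using this
  have hmax : Tendsto (fun j => max 0 (f i (g j) + ε (φ j))) atTop (nhds 0) := by
    apply tendsto_of_tendsto_of_tendsto_of_le_of_le' tendsto_const_nhds hMv
    · exact Eventually.of_forall fun j => le_max_left _ _
    · exact hev3
  have hεφ : Tendsto (fun j => ε (φ j)) atTop (nhds 0) := hεlim.comp hφ.tendsto_atTop
  have hsum : Tendsto (fun j => f i (g j) + ε (φ j)) atTop (nhds (f i xbar + 0)) :=
    hfgt.add hεφ
  have hle : f i xbar + 0 ≤ 0 := by
    apply le_of_tendsto_of_tendsto' hsum hmax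
    intro j
    exact le_max_right _ _
  linarith
end

section
/- Assume the PACA setting with the Slater condition, and suppose the PACA sequence (xᵏ) is infinite (xᵏ ∉ C for all k). Then (xᵏ) converges to some point x* ∈ C, i.e. there exists x* with fᵢ(x*) ≤ 0 for all i such that xᵏ → x*. -/
/-!
For every point `z` satisfying all constraints with margin `ε k`, one PACA step is Fejér:
`‖x (k+1) - z‖² + meanSqNorm v k ≤ ‖x k - z‖²`. Since `ε k → 0`, every strictly feasible point,
in particular the Slater point, eventually has this property. Hence the iterates are bounded and
`∑ meanSqNorm v k < ∞`, so the steps `v i k` tend to zero; as the subgradients are bounded on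
bounded sets, the residuals `max 0 (f i (x k) + ε k)` tend to zero and every cluster point `p` is
feasible. The points of the segment from `p` to the Slater point are strictly feasible and
accumulate at `p`, and the distance from `x k` to each of them is eventually nonincreasing;
this forces `x k → p`.
-/

open Filter Topology Metric
open scoped RealInnerProductSpace

lemma eventually_forall_ge_le_of_eventually_succ_le {α : Type*} [Preorder α] {d : ℕ → α}
    (h : ∀ᶠ k in atTop, d (k + 1) ≤ d k) : ∀ᶠ a in atTop, ∀ b ≥ a, d b ≤ d a := by
  obtain ⟨K, hK⟩ := eventually_atTop.1 h
  filter_upwards [eventually_ge_atTop K] with a ha b hab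
  exact antitoneOn_nat_Ici_of_succ_le hK ha (ha.trans hab) hab

lemma tendsto_zero_of_eventually_succ_add_le {a s : ℕ → ℝ} (ha : ∀ k, 0 ≤ a k)
    (hs : ∀ k, 0 ≤ s k) (h : ∀ᶠ k in atTop, a (k + 1) + s k ≤ a k) :
    Tendsto s atTop (𝓝 0) := by
  obtain ⟨K, hK⟩ := eventually_atTop.1 h
  have hpartial : ∀ N, ∑ j ∈ Finset.range N, s (j + K) ≤ a K - a (N + K) := by
    intro N
    induction N with
    | zero => simp
    | succ N ih =>
      rw [Finset.sum_range_succ]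
      have := hK (N + K) (Nat.le_add_left K N)
      rw [show N + 1 + K = N + K + 1 by omega]
      linarith
  have hsum : Summable fun j => s (j + K) :=
    summable_of_sum_range_le (fun j => hs _) fun N =>
      (hpartial N).trans (by linarith [ha (N + K)])
  exact (tendsto_add_atTop_iff_nat K).1 hsum.tendsto_atTop_zero

/-- A form of Opial's lemma. -/
lemma tendsto_of_mapClusterPt_of_mem_closure {X : Type*} [PseudoMetricSpace X] {x : ℕ → X}
    {Z : Set X} {p : X} (hp : MapClusterPt p atTop x) (hpZ : p ∈ closure Z)
    (hfejer : ∀ z ∈ Z, ∀ᶠ k in atTop, dist (x (k + 1)) z ≤ dist (x k) z) :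
    Tendsto x atTop (𝓝 p) := by
  refine Metric.tendsto_atTop.2 fun δ hδ => ?_
  obtain ⟨z, hz, hpz⟩ := Metric.mem_closure_iff.1 hpZ (δ / 3) (by positivity)
  have hnear : ∃ᶠ k in atTop, dist (x k) p < δ / 3 :=
    mapClusterPt_iff_frequently.1 hp _ (ball_mem_nhds p (by positivity))
  have hmono := eventually_forall_ge_le_of_eventually_succ_le (d := fun k => dist (x k) z)
    (hfejer z hz)
  obtain ⟨a, hmono, hxa⟩ := (hmono.and_frequently hnear).exists
  refine ⟨a, fun b hb => ?_⟩
  calc dist (x b) p ≤ dist (x b) z + dist z p := dist_triangle _ _ _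
    _ ≤ dist (x a) p + dist p z + dist z p := by
      gcongr
      exact (hmono b hb).trans (dist_triangle _ _ _)
    _ < δ := by rw [dist_comm z p]; linarith

lemma le_zero_of_mapClusterPt {X : Type*} [TopologicalSpace X] [FirstCountableTopology X]
    {g : X → ℝ} (hg : Continuous g) {x : ℕ → X} {ε : ℕ → ℝ} (hε : Tendsto ε atTop (𝓝 0))
    (hres : Tendsto (fun k => max 0 (g (x k) + ε k)) atTop (𝓝 0)) {p : X}
    (hp : MapClusterPt p atTop x) : g p ≤ 0 := by
  obtain ⟨ψ, hψ, hxψ⟩ := hp.tendsto_subseq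
  have hlim : Tendsto (fun j => g (x (ψ j)) + ε (ψ j)) atTop (𝓝 (g p + 0)) :=
    (hg.tendsto p |>.comp hxψ).add (hε.comp hψ.tendsto_atTop)
  simpa using le_of_tendsto_of_tendsto' hlim (hres.comp hψ.tendsto_atTop)
    fun j => le_max_right _ _

variable {E : Type*} [NormedAddCommGroup E]

noncomputable def meanSqNorm {ι : Type*} [Fintype ι] (v : ι → ℕ → E) (k : ℕ) : ℝ :=
  (Fintype.card ι : ℝ)⁻¹ * ∑ i, ‖v i k‖ ^ 2

lemma meanSqNorm_nonneg {ι : Type*} [Fintype ι] (v : ι → ℕ → E) (k : ℕ) :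
    0 ≤ meanSqNorm v k := by
  unfold meanSqNorm; positivity

variable [InnerProductSpace ℝ E]

lemma norm_sq_le_inner_of_le_inner {u y : E} {c : ℝ} (hc : c ≤ ⟪u, y⟫) :
    ‖(max 0 c / ‖u‖ ^ 2) • u‖ ^ 2 ≤ ⟪(max 0 c / ‖u‖ ^ 2) • u, y⟫ := by
  rcases le_or_gt c 0 with hc0 | hc0
  · simp [max_eq_left hc0]
  rcases eq_or_ne u 0 with rfl | hu
  · simp
  have hu2 : ‖u‖ ^ 2 ≠ 0 := by positivity
  have hsq : (c / ‖u‖ ^ 2) ^ 2 * ‖u‖ ^ 2 = c / ‖u‖ ^ 2 * c := by field_simp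
  rw [max_eq_right hc0.le, norm_smul, real_inner_smul_left, Real.norm_of_nonneg (by positivity),
    mul_pow, hsq]
  gcongr

lemma max_zero_eq_norm_smul_mul_norm {u : E} {c : ℝ} (hu : 0 < c → u ≠ 0) :
    max 0 c = ‖(max 0 c / ‖u‖ ^ 2) • u‖ * ‖u‖ := by
  rcases le_or_gt c 0 with hc | hc
  · simp [max_eq_left hc]
  have : ‖u‖ ≠ 0 := norm_ne_zero_iff.2 (hu hc)
  rw [max_eq_right hc.le, norm_smul, Real.norm_of_nonneg (by positivity)]
  field_simp

lemma norm_sq_inv_card_smul_sum_le {ι : Type*} [Fintype ι] (v : ι → E) :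
    ‖(Fintype.card ι : ℝ)⁻¹ • ∑ i, v i‖ ^ 2 ≤ (Fintype.card ι : ℝ)⁻¹ * ∑ i, ‖v i‖ ^ 2 := by
  set m : ℝ := (Fintype.card ι : ℝ)
  have hsum : ‖∑ i, v i‖ ^ 2 ≤ m * ∑ i, ‖v i‖ ^ 2 :=
    (pow_le_pow_left₀ (norm_nonneg _) (norm_sum_le _ _) 2).trans
      (by simpa using sq_sum_le_card_mul_sum_sq (s := Finset.univ) (f := fun i => ‖v i‖))
  rw [norm_smul, mul_pow, Real.norm_of_nonneg (by positivity)]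
  calc m⁻¹ ^ 2 * ‖∑ i, v i‖ ^ 2 ≤ m⁻¹ ^ 2 * (m * ∑ i, ‖v i‖ ^ 2) := by gcongr
    _ = m⁻¹ * ∑ i, ‖v i‖ ^ 2 := by
      rcases eq_or_ne m 0 with hm | hm
      · simp [hm]
      · field_simp

lemma norm_sub_sq_add_le_of_step {x x' z w : E} {S : ℝ} (hSw : S ≤ ⟪w, x - z⟫)
    (hwS : ‖w‖ ^ 2 ≤ S) (hstep0 : w = 0 → x' = x) (hstep : w ≠ 0 → x' = x - (S / ‖w‖ ^ 2) • w) :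
    ‖x' - z‖ ^ 2 + S ≤ ‖x - z‖ ^ 2 := by
  rcases eq_or_ne w 0 with hw | hw
  · have hS : S = 0 := le_antisymm (by simpa [hw] using hSw) (by simpa [hw] using hwS)
    simp [hstep0 hw, hS]
  have hW : 0 < ‖w‖ ^ 2 := by positivity
  set t := S / ‖w‖ ^ 2
  have ht : 1 ≤ t := (one_le_div hW).2 hwS
  have htW : t * ‖w‖ ^ 2 = S := div_mul_cancel₀ _ hW.ne'
  have hS' : S ≤ ⟪x - z, w⟫ := real_inner_comm w (x - z) ▸ hSw
  -- `‖x - z - t • w‖² = ‖x - z‖² - 2 t ⟪x - z, w⟫ + t S ≤ ‖x - z‖² - t S` and `t S ≥ S`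
  rw [hstep hw, sub_right_comm, norm_sub_sq_real, real_inner_smul_right, norm_smul, mul_pow,
    Real.norm_eq_abs, sq_abs]
  nlinarith

lemma mem_closure_setOf_forall_lt_zero {ι : Type*} {f : ι → E → ℝ}
    (hconv : ∀ i, ConvexOn ℝ Set.univ (f i)) {p q : E} (hp : ∀ i, f i p ≤ 0)
    (hq : ∀ i, f i q < 0) : p ∈ closure {z | ∀ i, f i z < 0} := by
  have hlim : Tendsto (fun t : ℝ => (1 - t) • p + t • q) (𝓝[>] 0) (𝓝 p) := by
    refine tendsto_nhdsWithin_of_tendsto_nhds ?_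
    have hcont : Continuous fun t : ℝ => (1 - t) • p + t • q := by fun_prop
    simpa using hcont.tendsto 0
  refine mem_closure_of_tendsto hlim ?_
  filter_upwards [Ioo_mem_nhdsGT one_pos] with t ht i
  have := (hconv i).2 (Set.mem_univ p) (Set.mem_univ q) (sub_nonneg.2 ht.2.le) ht.1.le
    (sub_add_cancel 1 t)
  simp only [smul_eq_mul] at this
  nlinarith [hp i, hq i, ht.1, ht.2]

lemma norm_le_two_mul_of_subgradient {f : E → ℝ} {x u c : E} {R M : ℝ}
    (hsub : ∀ z, f x + ⟪u, z - x⟫ ≤ f z) (hx : x ∈ closedBall c R)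
    (hM : ∀ z ∈ closedBall c (R + 1), |f z| ≤ M) : ‖u‖ ≤ 2 * M := by
  have hxM := hM x (closedBall_subset_closedBall (by linarith) hx)
  rcases eq_or_ne u 0 with rfl | hu
  · simpa using (abs_nonneg _).trans hxM
  set z := x + ‖u‖⁻¹ • u
  have hzx : z - x = ‖u‖⁻¹ • u := add_sub_cancel_left _ _
  have hz : z ∈ closedBall c (R + 1) := by
    rw [mem_closedBall] at hx ⊢
    calc dist z c ≤ dist z x + dist x c := dist_triangle _ _ _
      _ ≤ 1 + R := by
        rw [dist_eq_norm, hzx, norm_smul, norm_inv, norm_norm,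
          inv_mul_cancel₀ (norm_ne_zero_iff.2 hu)]
        gcongr
      _ = R + 1 := add_comm _ _
  have hinner : ⟪u, z - x⟫ = ‖u‖ := by
    rw [hzx, real_inner_smul_right, real_inner_self_eq_norm_sq]
    field_simp [norm_ne_zero_iff.2 hu]
  have := hsub z
  rw [hinner] at this
  linarith [abs_le.1 (hM z hz), abs_le.1 hxM]

structure IsPACASequence {ι : Type*} [Fintype ι] (f : ι → E → ℝ) (ε : ℕ → ℝ) (x : ℕ → E)
    (u v : ι → ℕ → E) (w : ℕ → E) : Prop where
  subgradient : ∀ i k z, f i (x k) + ⟪u i k, z - x k⟫ ≤ f i z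
  ne_zero : ∀ i k, 0 < f i (x k) + ε k → u i k ≠ 0
  v_eq : ∀ i k, v i k = (max 0 (f i (x k) + ε k) / ‖u i k‖ ^ 2) • u i k
  w_eq : ∀ k, w k = (Fintype.card ι : ℝ)⁻¹ • ∑ i, v i k
  step_of_eq_zero : ∀ k, w k = 0 → x (k + 1) = x k
  step_of_ne_zero : ∀ k, w k ≠ 0 → x (k + 1) = x k - (meanSqNorm v k / ‖w k‖ ^ 2) • w k

namespace IsPACASequence

variable {ι : Type*} [Fintype ι] {f : ι → E → ℝ} {ε : ℕ → ℝ} {x : ℕ → E} {u v : ι → ℕ → E}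
  {w : ℕ → E}

lemma norm_sub_sq_succ_add_le (hP : IsPACASequence f ε x u v w) {k : ℕ} {z : E}
    (hz : ∀ i, f i z + ε k ≤ 0) : ‖x (k + 1) - z‖ ^ 2 + meanSqNorm v k ≤ ‖x k - z‖ ^ 2 := by
  have hv : ∀ i, ‖v i k‖ ^ 2 ≤ ⟪v i k, x k - z⟫ := by
    intro i
    have hres : f i (x k) + ε k ≤ ⟪u i k, x k - z⟫ := by
      have := hP.subgradient i k z
      rw [← neg_sub, inner_neg_right] at this
      linarith [hz i]
    rw [hP.v_eq]
    exact norm_sq_le_inner_of_le_inner hres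
  refine norm_sub_sq_add_le_of_step ?_ ?_ (hP.step_of_eq_zero k) (hP.step_of_ne_zero k)
  · rw [hP.w_eq, real_inner_smul_left, sum_inner]
    exact mul_le_mul_of_nonneg_left (Finset.sum_le_sum fun i _ => hv i) (by positivity)
  · rw [hP.w_eq]
    exact norm_sq_inv_card_smul_sum_le _

lemma eventually_norm_sub_sq_succ_add_le (hP : IsPACASequence f ε x u v w)
    (hε : Tendsto ε atTop (𝓝 0)) {z : E} (hz : ∀ i, f i z < 0) :
    ∀ᶠ k in atTop, ‖x (k + 1) - z‖ ^ 2 + meanSqNorm v k ≤ ‖x k - z‖ ^ 2 := by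
  have hsmall : ∀ᶠ k in atTop, ∀ i, ε k < -f i z :=
    eventually_all.2 fun i => hε.eventually (gt_mem_nhds (neg_pos.2 (hz i)))
  filter_upwards [hsmall] with k hk
  exact hP.norm_sub_sq_succ_add_le fun i => by linarith [hk i]

lemma eventually_dist_succ_le (hP : IsPACASequence f ε x u v w) (hε : Tendsto ε atTop (𝓝 0))
    {z : E} (hz : ∀ i, f i z < 0) : ∀ᶠ k in atTop, dist (x (k + 1)) z ≤ dist (x k) z := by
  filter_upwards [hP.eventually_norm_sub_sq_succ_add_le hε hz] with k hk
  rw [dist_eq_norm, dist_eq_norm,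
    ← pow_le_pow_iff_left₀ (norm_nonneg _) (norm_nonneg _) two_ne_zero]
  linarith [meanSqNorm_nonneg v k]

lemma exists_eventually_mem_closedBall (hP : IsPACASequence f ε x u v w)
    (hε : Tendsto ε atTop (𝓝 0)) {z : E} (hz : ∀ i, f i z < 0) :
    ∃ R, ∀ᶠ k in atTop, x k ∈ closedBall z R := by
  obtain ⟨a, ha⟩ := (eventually_forall_ge_le_of_eventually_succ_le
    (d := fun k => dist (x k) z) (hP.eventually_dist_succ_le hε hz)).exists_forall_of_atTop
  exact ⟨dist (x a) z, eventually_atTop.2 ⟨a, ha a le_rfl⟩⟩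

lemma tendsto_norm_v (hP : IsPACASequence f ε x u v w) (hε : Tendsto ε atTop (𝓝 0)) {z : E}
    (hz : ∀ i, f i z < 0) (i : ι) : Tendsto (fun k => ‖v i k‖) atTop (𝓝 0) := by
  have hmean : Tendsto (meanSqNorm v) atTop (𝓝 0) :=
    tendsto_zero_of_eventually_succ_add_le (fun k => sq_nonneg ‖x k - z‖) (meanSqNorm_nonneg v)
      (hP.eventually_norm_sub_sq_succ_add_le hε hz)
  have hle : ∀ k, ‖v i k‖ ≤ √(Fintype.card ι * meanSqNorm v k) := by
    intro k
    have : Nonempty ι := ⟨i⟩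
    have hcard : (Fintype.card ι : ℝ) ≠ 0 := Nat.cast_ne_zero.2 Fintype.card_ne_zero
    rw [Real.le_sqrt (norm_nonneg _) (by positivity [meanSqNorm_nonneg v k]), meanSqNorm,
      mul_inv_cancel_left₀ hcard]
    exact Finset.single_le_sum (f := fun j => ‖v j k‖ ^ 2) (fun j _ => by positivity)
      (Finset.mem_univ i)
  have hlim : Tendsto (fun k => √(Fintype.card ι * meanSqNorm v k)) atTop (𝓝 0) := by
    simpa using ((hmean.const_mul (Fintype.card ι : ℝ)).sqrt)
  exact squeeze_zero (fun k => norm_nonneg _) hle hlim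

lemma tendsto_max_zero_add [ProperSpace E] (hP : IsPACASequence f ε x u v w)
    (hcont : ∀ i, Continuous (f i))
    {c : E} {R : ℝ} (hbdd : ∀ᶠ k in atTop, x k ∈ closedBall c R)
    (hv : ∀ i, Tendsto (fun k => ‖v i k‖) atTop (𝓝 0)) (i : ι) :
    Tendsto (fun k => max 0 (f i (x k) + ε k)) atTop (𝓝 0) := by
  obtain ⟨M, hM⟩ := (isCompact_closedBall c (R + 1)).exists_bound_of_continuousOn
    (hcont i).continuousOn
  have hle : ∀ᶠ k in atTop, max 0 (f i (x k) + ε k) ≤ ‖v i k‖ * (2 * M) := by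
    filter_upwards [hbdd] with k hk
    rw [max_zero_eq_norm_smul_mul_norm (hP.ne_zero i k), ← hP.v_eq]
    exact mul_le_mul_of_nonneg_left
      (norm_le_two_mul_of_subgradient (hP.subgradient i k) hk hM) (norm_nonneg _)
  exact squeeze_zero' (Eventually.of_forall fun k => le_max_left _ _) hle
    (by simpa using (hv i).mul_const (2 * M))

end IsPACASequence

theorem stmt_11_general {n m : ℕ}
    (f : Fin m → EuclideanSpace ℝ (Fin n) → ℝ)
    (hconv : ∀ i, ConvexOn ℝ Set.univ (f i))
    (xhat : EuclideanSpace ℝ (Fin n)) (hslater : ∀ i, f i xhat < 0)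
    (ε : ℕ → ℝ)
    (hεlim : Tendsto ε atTop (nhds 0))
    (x : ℕ → EuclideanSpace ℝ (Fin n))
    (u v : Fin m → ℕ → EuclideanSpace ℝ (Fin n))
    (w : ℕ → EuclideanSpace ℝ (Fin n))
    (hsub : ∀ i k, ∀ z, f i (x k) + ⟪u i k, z - x k⟫ ≤ f i z)
    (hune : ∀ i k, 0 < f i (x k) + ε k → u i k ≠ 0)
    (hv : ∀ i k, v i k = (max 0 (f i (x k) + ε k) / ‖u i k‖ ^ 2) • u i k)
    (hw : ∀ k, w k = (m : ℝ)⁻¹ • ∑ i, v i k)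
    (hstep0 : ∀ k, w k = 0 → x (k + 1) = x k)
    (hstep : ∀ k, w k ≠ 0 →
      x (k + 1) = x k - (((m : ℝ)⁻¹ * ∑ i, ‖v i k‖ ^ 2) / ‖w k‖ ^ 2) • w k) :
    ∃ xstar : EuclideanSpace ℝ (Fin n),
      (∀ i, f i xstar ≤ 0) ∧ Tendsto x atTop (nhds xstar) := by
  have hP : IsPACASequence f ε x u v w :=
    { subgradient := hsub
      ne_zero := hune
      v_eq := hv
      w_eq := by simpa using hw
      step_of_eq_zero := hstep0
      step_of_ne_zero := by simpa [meanSqNorm] using hstep }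
  have hcont : ∀ i, Continuous (f i) := fun i =>
    continuousOn_univ.1 ((hconv i).continuousOn isOpen_univ)
  obtain ⟨R, hR⟩ := hP.exists_eventually_mem_closedBall hεlim hslater
  obtain ⟨p, -, hp⟩ :=
    (isCompact_closedBall xhat R).exists_mapClusterPt_of_frequently hR.frequently
  have hres := hP.tendsto_max_zero_add hcont hR (hP.tendsto_norm_v hεlim hslater)
  have hpC : ∀ i, f i p ≤ 0 := fun i => le_zero_of_mapClusterPt (hcont i) hεlim (hres i) hp
  exact ⟨p, hpC, tendsto_of_mapClusterPt_of_mem_closure hp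
    (mem_closure_setOf_forall_lt_zero hconv hpC hslater)
    fun z hz => hP.eventually_dist_succ_le hεlim hz⟩

theorem stmt_11 {n m : ℕ} (hm : 0 < m)
    (f : Fin m → EuclideanSpace ℝ (Fin n) → ℝ)
    (hconv : ∀ i, ConvexOn ℝ Set.univ (f i))
    (xhat : EuclideanSpace ℝ (Fin n)) (hslater : ∀ i, f i xhat < 0)
    (ε : ℕ → ℝ) (hεpos : ∀ k, 0 < ε k) (hεanti : StrictAnti ε)
    (hεlim : Tendsto ε atTop (nhds 0))
    (x : ℕ → EuclideanSpace ℝ (Fin n))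
    (u v : Fin m → ℕ → EuclideanSpace ℝ (Fin n))
    (w : ℕ → EuclideanSpace ℝ (Fin n))
    (hsub : ∀ i k, ∀ z, f i (x k) + ⟪u i k, z - x k⟫ ≤ f i z)
    (hune : ∀ i k, 0 < f i (x k) + ε k → u i k ≠ 0)
    (hv : ∀ i k, v i k = (max 0 (f i (x k) + ε k) / ‖u i k‖ ^ 2) • u i k)
    (hw : ∀ k, w k = (m : ℝ)⁻¹ • ∑ i, v i k)
    (hstep0 : ∀ k, w k = 0 → x (k + 1) = x k)
    (hstep : ∀ k, w k ≠ 0 →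
      x (k + 1) = x k - (((m : ℝ)⁻¹ * ∑ i, ‖v i k‖ ^ 2) / ‖w k‖ ^ 2) • w k)
    (hinfinite : ∀ k, ∃ i, 0 < f i (x k)) :
    ∃ xstar : EuclideanSpace ℝ (Fin n),
      (∀ i, f i xstar ≤ 0) ∧ Tendsto x atTop (nhds xstar) :=
  stmt_11_general f hconv xhat hslater ε hεlim x u v w hsub hune hv hw hstep0 hstep
end

section
/- Assume the PACA setting with the Slater condition, and suppose the PACA sequence (xᵏ) is infinite (xᵏ ∉ C for all k). Let f(x) = max_{1≤i≤m} fᵢ(x). Then there exist N ∈ ℕ and β > 0 such that for all k ≥ N the set Cᵏ is nonempty and dist(xᵏ, Cᵏ) ≤ β (f(xᵏ) + ε_k). -/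
open Filter
open scoped RealInnerProductSpace
set_option maxHeartbeats 1000000

theorem stmt_13 {n m : ℕ} (hm : 0 < m)
    (f : Fin m → EuclideanSpace ℝ (Fin n) → ℝ)
    (hconv : ∀ i, ConvexOn ℝ Set.univ (f i))
    (xhat : EuclideanSpace ℝ (Fin n)) (hslater : ∀ i, f i xhat < 0)
    (ε : ℕ → ℝ) (hεpos : ∀ k, 0 < ε k) (hεanti : StrictAnti ε)
    (hεlim : Tendsto ε atTop (nhds 0))
    (x : ℕ → EuclideanSpace ℝ (Fin n))
    (u v : Fin m → ℕ → EuclideanSpace ℝ (Fin n))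
    (w : ℕ → EuclideanSpace ℝ (Fin n))
    (hsub : ∀ i k, ∀ z, f i (x k) + ⟪u i k, z - x k⟫ ≤ f i z)
    (hune : ∀ i k, 0 < f i (x k) + ε k → u i k ≠ 0)
    (hv : ∀ i k, v i k = (max 0 (f i (x k) + ε k) / ‖u i k‖ ^ 2) • u i k)
    (hw : ∀ k, w k = (m : ℝ)⁻¹ • ∑ i, v i k)
    (hstep0 : ∀ k, w k = 0 → x (k + 1) = x k)
    (hstep : ∀ k, w k ≠ 0 →
      x (k + 1) = x k - (((m : ℝ)⁻¹ * ∑ i, ‖v i k‖ ^ 2) / ‖w k‖ ^ 2) • w k)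
    (hinfinite : ∀ k, ∃ i, 0 < f i (x k)) :
    ∃ N : ℕ, ∃ β : ℝ, 0 < β ∧ ∀ k ≥ N,
      ({z : EuclideanSpace ℝ (Fin n) | ∀ i, f i z + ε k ≤ 0}).Nonempty ∧
        Metric.infDist (x k) {z : EuclideanSpace ℝ (Fin n) | ∀ i, f i z + ε k ≤ 0} ≤
          β * ((Finset.univ.sup'
                (Finset.univ_nonempty_iff.mpr (Fin.pos_iff_nonempty.mp hm))
                fun i => f i (x k)) + ε k) := by
  classical
  have hne : (Finset.univ : Finset (Fin m)).Nonempty :=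
    Finset.univ_nonempty_iff.mpr (Fin.pos_iff_nonempty.mp hm)
  -- Fejér monotonicity of a PACA step w.r.t. any point of Cᵏ
  have fejer : ∀ k, ∀ c : EuclideanSpace ℝ (Fin n), (∀ i, f i c + ε k ≤ 0) →
      ‖x (k+1) - c‖ ≤ ‖x k - c‖ := by
    intro k c hc
    by_cases hw0 : w k = 0
    · rw [hstep0 k hw0]
    · set S : ℝ := (m:ℝ)⁻¹ * ∑ i, ‖v i k‖ ^ 2 with hS
      set α : ℝ := S / ‖w k‖ ^ 2 with hα
      have hwpos : (0:ℝ) < ‖w k‖ := norm_pos_iff.mpr hw0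
      have hkey : ∀ i : Fin m, ‖v i k‖ ^ 2 ≤ ⟪v i k, x k - c⟫ := by
        intro i
        by_cases hai : f i (x k) + ε k ≤ 0
        · have hv0 : v i k = 0 := by
            rw [hv i k, max_eq_left hai]
            simp
          simp [hv0]
        · push_neg at hai
          have hu : u i k ≠ 0 := hune i k hai
          have hupos : (0:ℝ) < ‖u i k‖ ^ 2 := pow_pos (norm_pos_iff.mpr hu) 2
          have hmax : max 0 (f i (x k) + ε k) = f i (x k) + ε k := max_eq_right hai.le
          have hip : f i (x k) + ε k ≤ ⟪u i k, x k - c⟫ := by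
            have h1 := hsub i k c
            have h2 : f i c ≤ -ε k := by linarith [hc i]
            have h3 : ⟪u i k, c - x k⟫ = -⟪u i k, x k - c⟫ := by
              rw [← neg_sub, inner_neg_right]
            linarith
          have hvnorm : ‖v i k‖ ^ 2 = (f i (x k) + ε k) ^ 2 / ‖u i k‖ ^ 2 := by
            rw [hv i k, hmax, norm_smul, Real.norm_eq_abs,
              abs_of_nonneg (div_nonneg hai.le hupos.le), mul_pow, div_pow]
            field_simp
          have hvip : ⟪v i k, x k - c⟫
              = (f i (x k) + ε k) / ‖u i k‖ ^ 2 * ⟪u i k, x k - c⟫ := by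
            rw [hv i k, hmax, real_inner_smul_left]
          rw [hvnorm, hvip, div_mul_eq_mul_div]
          exact (div_le_div_iff_of_pos_right hupos).mpr (by nlinarith)
      have hinner : S ≤ ⟪w k, x k - c⟫ := by
        have h6 : ∑ i, ‖v i k‖ ^ 2 ≤ ∑ i, ⟪v i k, x k - c⟫ :=
          Finset.sum_le_sum fun i _ => hkey i
        have h7 : (0:ℝ) ≤ (m:ℝ)⁻¹ := by positivity
        calc S = (m:ℝ)⁻¹ * ∑ i, ‖v i k‖ ^ 2 := hS
          _ ≤ (m:ℝ)⁻¹ * ∑ i, ⟪v i k, x k - c⟫ := mul_le_mul_of_nonneg_left h6 h7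
          _ = ⟪w k, x k - c⟫ := by rw [hw k, real_inner_smul_left, sum_inner]
      have hS0 : (0:ℝ) ≤ S := by
        rw [hS]
        exact mul_nonneg (by positivity) (Finset.sum_nonneg fun i _ => sq_nonneg _)
      have hα0 : (0:ℝ) ≤ α := div_nonneg hS0 (sq_nonneg _)
      have hαw : α * ‖w k‖ ^ 2 = S := by
        rw [hα]; field_simp
      have hx1 : x (k+1) - c = (x k - c) - α • w k := by
        rw [hstep k hw0, ← hS, ← hα]; abel
      have expand : ‖x (k+1) - c‖ ^ 2
          = ‖x k - c‖ ^ 2 - 2*(α*⟪w k, x k - c⟫) + α^2*‖w k‖^2 := by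
        rw [hx1, @norm_sub_sq_real, real_inner_smul_right, norm_smul, mul_pow,
          Real.norm_eq_abs, sq_abs, real_inner_comm]
      have hsq : ‖x (k+1) - c‖ ^ 2 ≤ ‖x k - c‖ ^ 2 := by
        rw [expand]
        have h5 : α^2*‖w k‖^2 = α*S := by
          have : α^2*‖w k‖^2 = α * (α * ‖w k‖^2) := by ring
          rw [this, hαw]
        nlinarith [mul_le_mul_of_nonneg_left hinner hα0, mul_nonneg hα0 hS0]
      nlinarith [norm_nonneg (x (k+1) - c), norm_nonneg (x k - c), hsq]
  -- choice of N
  set δ : ℝ := -(Finset.univ.sup' hne fun i => f i xhat) with hδdef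
  have hδ : 0 < δ := by
    have : Finset.univ.sup' hne (fun i => f i xhat) < 0 :=
      (Finset.sup'_lt_iff hne).mpr fun i _ => hslater i
    simp only [hδdef]; linarith
  obtain ⟨N, hN⟩ : ∃ N, ε N < δ := (hεlim.eventually_lt_const hδ).exists
  set δ' : ℝ := δ - ε N with hδ'def
  have hδ' : 0 < δ' := by simp only [hδ'def]; linarith
  have hmem : ∀ k ≥ N, ∀ i, f i xhat + ε k ≤ -δ' := by
    intro k hk i
    have h1 : f i xhat ≤ -δ := by
      have := Finset.le_sup' (fun i => f i xhat) (Finset.mem_univ i)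
      simp only [hδdef]; linarith
    have h2 : ε k ≤ ε N := hεanti.antitone hk
    simp only [hδ'def]; linarith
  set R : ℝ := ‖x N - xhat‖ with hR
  have hR0 : 0 ≤ R := norm_nonneg _
  have hbound : ∀ k ≥ N, ‖x k - xhat‖ ≤ R := by
    intro k hk
    induction k, hk using Nat.le_induction with
    | base => exact le_refl R
    | succ k hk ih =>
      refine le_trans (fejer k xhat fun i => ?_) ih
      linarith [hmem k hk i]
  refine ⟨N, (R+1)/δ', div_pos (by linarith) hδ', ?_⟩
  intro k hk
  have hxhatmem : xhat ∈ {z : EuclideanSpace ℝ (Fin n) | ∀ i, f i z + ε k ≤ 0} := by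
    intro i; linarith [hmem k hk i]
  refine ⟨⟨xhat, hxhatmem⟩, ?_⟩
  set a : ℝ := (Finset.univ.sup' hne fun i => f i (x k)) + ε k with ha_def
  have ha : 0 < a := by
    obtain ⟨i, hi⟩ := hinfinite k
    have := Finset.le_sup' (fun i => f i (x k)) (Finset.mem_univ i)
    simp only [ha_def]
    have := hεpos k
    linarith [Finset.le_sup' (fun i => f i (x k)) (Finset.mem_univ i)]
  set lam : ℝ := a / (a + δ') with hlam_def
  have hlam0 : 0 ≤ lam := div_nonneg ha.le (by linarith)
  have hlam1 : lam ≤ 1 := by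
    rw [hlam_def, div_le_one (by linarith)]; linarith
  have hlamkey : lam * (a + δ') = a := by
    rw [hlam_def]; field_simp
  set z : EuclideanSpace ℝ (Fin n) := (1 - lam) • x k + lam • xhat with hz_def
  have hzmem : z ∈ {z : EuclideanSpace ℝ (Fin n) | ∀ i, f i z + ε k ≤ 0} := by
    intro i
    have hcvx := (hconv i).2 (Set.mem_univ (x k)) (Set.mem_univ xhat)
      (by linarith : (0:ℝ) ≤ 1 - lam) hlam0 (by ring)
    have h1 : f i (x k) ≤ a - ε k := by
      have := Finset.le_sup' (fun i => f i (x k)) (Finset.mem_univ i)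
      simp only [ha_def]; linarith
    have h2 : f i xhat + ε k ≤ -δ' := hmem k hk i
    have h3 : f i z ≤ (1 - lam) * f i (x k) + lam * f i xhat := hcvx
    nlinarith [mul_le_mul_of_nonneg_left h1 (by linarith : (0:ℝ) ≤ 1 - lam),
      mul_le_mul_of_nonneg_left h2 hlam0]
  have hdist : Metric.infDist (x k) {z : EuclideanSpace ℝ (Fin n) | ∀ i, f i z + ε k ≤ 0}
      ≤ dist (x k) z := Metric.infDist_le_dist_of_mem hzmem
  have hdz : dist (x k) z = lam * ‖x k - xhat‖ := by
    rw [dist_eq_norm]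
    have hxz : x k - z = lam • (x k - xhat) := by
      rw [hz_def]; module
    rw [hxz, norm_smul, Real.norm_eq_abs, abs_of_nonneg hlam0]
  have hlamle : lam ≤ a / δ' := by
    rw [hlam_def, div_le_div_iff₀ (by linarith) hδ']
    nlinarith
  have hchain : lam * ‖x k - xhat‖ ≤ (R+1)/δ' * a := by
    have h1 : lam * ‖x k - xhat‖ ≤ lam * R :=
      mul_le_mul_of_nonneg_left (hbound k hk) hlam0
    have h2 : lam * R ≤ (a/δ') * R := mul_le_mul_of_nonneg_right hlamle hR0
    have h3 : (a/δ') * R ≤ (R+1)/δ' * a := by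
      rw [div_mul_eq_mul_div, div_mul_eq_mul_div, div_le_div_iff₀ hδ' hδ']
      nlinarith
    linarith
  calc Metric.infDist (x k) {z : EuclideanSpace ℝ (Fin n) | ∀ i, f i z + ε k ≤ 0}
      ≤ dist (x k) z := hdist
    _ = lam * ‖x k - xhat‖ := hdz
    _ ≤ (R+1)/δ' * a := hchain
end

section
/- Assume the PACA setting with the Slater condition, and suppose the PACA sequence (xᵏ) is infinite (xᵏ ∉ C for all k). Then the sequence (dist(xᵏ, Cᵏ)) converges Q-linearly to 0: there exist N ∈ ℕ and λ ∈ (0,1) such that for all k ≥ N the set Cᵏ is nonempty and dist(xᵏ⁺¹, Cᵏ⁺¹) ≤ λ · dist(xᵏ, Cᵏ). -/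
set_option maxHeartbeats 1000000


open Filter
open scoped RealInnerProductSpace

theorem stmt_15 {n m : ℕ} (hm : 0 < m)
    (f : Fin m → EuclideanSpace ℝ (Fin n) → ℝ)
    (hconv : ∀ i, ConvexOn ℝ Set.univ (f i))
    (xhat : EuclideanSpace ℝ (Fin n)) (hslater : ∀ i, f i xhat < 0)
    (ε : ℕ → ℝ) (hεpos : ∀ k, 0 < ε k) (hεanti : StrictAnti ε)
    (hεlim : Tendsto ε atTop (nhds 0))
    (x : ℕ → EuclideanSpace ℝ (Fin n))
    (u v : Fin m → ℕ → EuclideanSpace ℝ (Fin n))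
    (w : ℕ → EuclideanSpace ℝ (Fin n))
    (hsub : ∀ i k, ∀ z, f i (x k) + ⟪u i k, z - x k⟫ ≤ f i z)
    (hune : ∀ i k, 0 < f i (x k) + ε k → u i k ≠ 0)
    (hv : ∀ i k, v i k = (max 0 (f i (x k) + ε k) / ‖u i k‖ ^ 2) • u i k)
    (hw : ∀ k, w k = (m : ℝ)⁻¹ • ∑ i, v i k)
    (hstep0 : ∀ k, w k = 0 → x (k + 1) = x k)
    (hstep : ∀ k, w k ≠ 0 →
      x (k + 1) = x k - (((m : ℝ)⁻¹ * ∑ i, ‖v i k‖ ^ 2) / ‖w k‖ ^ 2) • w k)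
    (hinfinite : ∀ k, ∃ i, 0 < f i (x k)) :
    ∃ N : ℕ, ∃ lam : ℝ, 0 < lam ∧ lam < 1 ∧ ∀ k ≥ N,
      ({z : EuclideanSpace ℝ (Fin n) | ∀ i, f i z + ε k ≤ 0}).Nonempty ∧
        Metric.infDist (x (k + 1)) {z : EuclideanSpace ℝ (Fin n) | ∀ i, f i z + ε (k + 1) ≤ 0} ≤
          lam * Metric.infDist (x k) {z : EuclideanSpace ℝ (Fin n) | ∀ i, f i z + ε k ≤ 0} := by
  classical
  have hFin : Nonempty (Fin m) := ⟨⟨0, hm⟩⟩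
  have hne : (Finset.univ : Finset (Fin m)).Nonempty := Finset.univ_nonempty
  have hm' : (0 : ℝ) < (m : ℝ) := by exact_mod_cast hm
  set φ : ℝ := Finset.univ.sup' hne (fun i => f i xhat) with hφdef
  have hφ : φ < 0 := (Finset.sup'_lt_iff hne).2 (fun i _ => hslater i)
  set a : ℝ := -φ / 2 with hadef
  have ha : 0 < a := by simp only [hadef]; linarith only [hφ]
  -- choose N
  obtain ⟨N, hN⟩ := eventually_atTop.1 (hεlim.eventually_lt_const ha)
  -- radius
  set R : ℝ := ‖x N - xhat‖ with hRdef
  have hxN : x N ≠ xhat := by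
    intro h
    obtain ⟨i, hi⟩ := hinfinite N
    rw [h] at hi
    exact absurd hi (not_lt.2 (hslater i).le)
  have hR : 0 < R := norm_pos_iff.2 (sub_ne_zero.2 hxN)
  -- continuity of the f i
  have hcont : ∀ i, Continuous (f i) := by
    intro i
    exact continuousOn_univ.mp ((hconv i).continuousOn isOpen_univ)
  -- bound on f i over the ball of radius R + 1
  have hMex : ∀ i, ∃ M : ℝ, ∀ y ∈ Metric.closedBall xhat (R + 1), f i y ≤ M := by
    intro i
    obtain ⟨C, hC⟩ := (isCompact_closedBall xhat (R + 1)).exists_bound_of_continuousOn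
      (hcont i).continuousOn
    exact ⟨C, fun y hy => (le_abs_self _).trans (by simpa [Real.norm_eq_abs] using hC y hy)⟩
  choose M hM using hMex
  set U : ℝ := max (Finset.univ.sup' hne M + ε 0) 1 with hUdef
  have hU1 : (1 : ℝ) ≤ U := le_max_right _ _
  have hU : 0 < U := lt_of_lt_of_le one_pos hU1
  -- constants
  set c0 : ℝ := a ^ 2 / ((m : ℝ) * R ^ 2 * U ^ 2) with hc0def
  have hc0 : 0 < c0 := by positivity
  set c : ℝ := min c0 (1 / 2) with hcdef
  have hc : 0 < c := lt_min hc0 (by norm_num)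
  have hc2 : c ≤ 1 / 2 := min_le_right _ _
  have hcc0 : c ≤ c0 := min_le_left _ _
  set lam : ℝ := Real.sqrt (1 - c) with hlamdef
  have hlam0 : 0 < lam := Real.sqrt_pos.2 (by linarith only [hc2])
  have hlam1 : lam < 1 := by
    have : lam < Real.sqrt 1 := Real.sqrt_lt_sqrt (by linarith only [hc2]) (by linarith only [hc])
    simpa using this
  have hlamsq : lam ^ 2 = 1 - c := Real.sq_sqrt (by linarith only [hc2])
  -- key step lemma
  have key : ∀ k, N ≤ k → ‖x k - xhat‖ ≤ R →
      ‖x (k + 1) - xhat‖ ≤ R ∧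
      Metric.infDist (x (k + 1)) {z : EuclideanSpace ℝ (Fin n) | ∀ i, f i z + ε (k + 1) ≤ 0} ≤
        lam * Metric.infDist (x k) {z : EuclideanSpace ℝ (Fin n) | ∀ i, f i z + ε k ≤ 0} := by
    intro k hk hxk
    have hεa : ε k < a := hN k hk
    set Ck : Set (EuclideanSpace ℝ (Fin n)) := {z | ∀ i, f i z + ε k ≤ 0} with hCkdef
    have hxhatCk : xhat ∈ Ck := by
      intro i
      have h1 : f i xhat ≤ φ := Finset.le_sup' (fun i => f i xhat) (Finset.mem_univ i)
      simp only [hadef] at hεa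
      linarith only [h1, hεa, hφ]
    have hCkne : Ck.Nonempty := ⟨xhat, hxhatCk⟩
    -- basic inner product inequality
    have hvz : ∀ i, ∀ z ∈ Ck, ‖v i k‖ ^ 2 ≤ ⟪v i k, x k - z⟫ := by
      intro i z hz
      by_cases hpos : 0 < f i (x k) + ε k
      · have hu : u i k ≠ 0 := hune i k hpos
        have hun : 0 < ‖u i k‖ := norm_pos_iff.2 hu
        have hmax : max 0 (f i (x k) + ε k) = f i (x k) + ε k := max_eq_right hpos.le
        set t : ℝ := f i (x k) + ε k with htdef
        have hinner : t ≤ ⟪u i k, x k - z⟫ := by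
          have h1 := hsub i k z
          have h2 : f i z + ε k ≤ 0 := hz i
          have h3 : ⟪u i k, z - x k⟫ = -⟪u i k, x k - z⟫ := by
            rw [← inner_neg_right]; congr 1; abel
          rw [h3] at h1
          linarith only [h1, hz i, htdef]
        rw [hv i k, hmax, real_inner_smul_left, norm_smul]
        have hnn : 0 ≤ t / ‖u i k‖ ^ 2 := div_nonneg hpos.le (by positivity)
        rw [Real.norm_eq_abs, abs_of_nonneg hnn, mul_pow]
        have hexp : (t / ‖u i k‖ ^ 2) ^ 2 * ‖u i k‖ ^ 2 = (t / ‖u i k‖ ^ 2) * t := by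
          field_simp
        rw [hexp]
        exact mul_le_mul_of_nonneg_left hinner hnn
      · have : max 0 (f i (x k) + ε k) = 0 := max_eq_left (not_lt.1 hpos)
        rw [hv i k, this]
        simp
    -- S
    set S : ℝ := (m : ℝ)⁻¹ * ∑ i, ‖v i k‖ ^ 2 with hSdef
    have hwS : ∀ z ∈ Ck, S ≤ ⟪w k, x k - z⟫ := by
      intro z hz
      rw [hw k, real_inner_smul_left, hSdef]
      have : (∑ i, ‖v i k‖ ^ 2) ≤ ⟪∑ i, v i k, x k - z⟫ := by
        rw [sum_inner]
        exact Finset.sum_le_sum fun i _ => hvz i z hz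
      have hmi : (0 : ℝ) ≤ (m : ℝ)⁻¹ := by positivity
      exact mul_le_mul_of_nonneg_left this hmi
    -- the max of the residuals
    set G : ℝ := Finset.univ.sup' hne (fun i => f i (x k) + ε k) with hGdef
    have hG : 0 < G := by
      obtain ⟨i, hi⟩ := hinfinite k
      have h6 : f i (x k) + ε k ≤ G := Finset.le_sup' (fun i => f i (x k) + ε k) (Finset.mem_univ i)
      have h7 := hεpos k
      linarith only [h6, h7, hi]
    obtain ⟨i', -, hi'⟩ := Finset.exists_mem_eq_sup' hne (fun i => f i (x k) + ε k)
    have hGi : G = f i' (x k) + ε k := hi'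
    have hu' : u i' k ≠ 0 := hune i' k (by rw [← hGi]; exact hG)
    have hun' : 0 < ‖u i' k‖ := norm_pos_iff.2 hu'
    -- bound on the subgradient norm
    have huU : ‖u i' k‖ ≤ U := by
      set z : EuclideanSpace ℝ (Fin n) := x k + ‖u i' k‖⁻¹ • u i' k with hzdef
      have hzx : z - x k = ‖u i' k‖⁻¹ • u i' k := by rw [hzdef]; abel
      have h1 := hsub i' k z
      rw [hzx, real_inner_smul_right, real_inner_self_eq_norm_sq] at h1
      have h2 : ‖u i' k‖⁻¹ * ‖u i' k‖ ^ 2 = ‖u i' k‖ := by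
        field_simp [hun'.ne']
      rw [h2] at h1
      have hzball : z ∈ Metric.closedBall xhat (R + 1) := by
        rw [Metric.mem_closedBall, dist_eq_norm, hzdef]
        have : x k + ‖u i' k‖⁻¹ • u i' k - xhat = (x k - xhat) + ‖u i' k‖⁻¹ • u i' k := by abel
        rw [this]
        refine (norm_add_le _ _).trans ?_
        rw [norm_smul, Real.norm_eq_abs, abs_of_nonneg (by positivity), inv_mul_cancel₀ hun'.ne']
        linarith only [hxk]
      have h3 : f i' z ≤ M i' := hM i' z hzball
      have h4 : M i' ≤ Finset.univ.sup' hne M := Finset.le_sup' M (Finset.mem_univ i')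
      have h5 : -ε 0 ≤ f i' (x k) := by
        have hε0 : ε k ≤ ε 0 := hεanti.antitone (Nat.zero_le k)
        have h6 : 0 < f i' (x k) + ε k := by rw [← hGi]; exact hG
        linarith only [hε0, h6]
      have h7 : ‖u i' k‖ ≤ Finset.univ.sup' hne M + ε 0 := by linarith only [h1, h3, h4, h5]
      exact h7.trans (le_max_left _ _)
    -- lower bound on S
    have hvG : G ^ 2 / U ^ 2 ≤ ‖v i' k‖ ^ 2 := by
      have hmax : max 0 (f i' (x k) + ε k) = G := by
        rw [← hGi]; exact max_eq_right hG.le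
      rw [hv i' k, hmax, norm_smul, Real.norm_eq_abs,
        abs_of_nonneg (div_nonneg hG.le (by positivity)), mul_pow]
      have h0 : (‖u i' k‖ ^ 2 : ℝ) ≠ 0 := by positivity
      have hexp : (G / ‖u i' k‖ ^ 2) ^ 2 * ‖u i' k‖ ^ 2 = G ^ 2 / ‖u i' k‖ ^ 2 := by
        rw [div_pow, pow_two (‖u i' k‖ ^ 2), ← div_div, div_mul_cancel₀ _ h0]
      rw [hexp]
      gcongr
    have hSG : G ^ 2 / ((m : ℝ) * U ^ 2) ≤ S := by
      have h1 : ‖v i' k‖ ^ 2 ≤ ∑ i, ‖v i k‖ ^ 2 :=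
        Finset.single_le_sum (f := fun i => ‖v i k‖ ^ 2) (fun i _ => by positivity)
          (Finset.mem_univ i')
      have h2 : G ^ 2 / U ^ 2 ≤ ∑ i, ‖v i k‖ ^ 2 := hvG.trans h1
      have h3 : G ^ 2 / ((m : ℝ) * U ^ 2) = (m : ℝ)⁻¹ * (G ^ 2 / U ^ 2) := by
        rw [mul_comm (m : ℝ) (U ^ 2), ← div_div, div_eq_inv_mul]
      rw [h3, hSdef]
      exact mul_le_mul_of_nonneg_left h2 (by positivity)
    have hSpos : 0 < S := lt_of_lt_of_le (by positivity) hSG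
    -- error bound
    set d : ℝ := Metric.infDist (x k) Ck with hddef
    have hd0 : 0 ≤ d := Metric.infDist_nonneg
    have herr : a / R * d ≤ G := by
      set t : ℝ := G / (G + a) with htdef
      have hGa : 0 < G + a := by linarith only [hG, ha]
      have ht0 : 0 < t := div_pos hG hGa
      have ht1 : t < 1 := by rw [htdef, div_lt_one hGa]; linarith only [ha]
      set y : EuclideanSpace ℝ (Fin n) := (1 - t) • x k + t • xhat with hydef
      have hyCk : y ∈ Ck := by
        intro i
        have hcvx := (hconv i).2 (Set.mem_univ (x k)) (Set.mem_univ xhat)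
          (by linarith only [ht1] : (0:ℝ) ≤ 1 - t) ht0.le (by ring)
        have h1 : f i (x k) + ε k ≤ G := Finset.le_sup' (fun i => f i (x k) + ε k) (Finset.mem_univ i)
        have h2 : f i xhat + ε k ≤ -a := by
          have hφi : f i xhat ≤ φ := Finset.le_sup' (fun i => f i xhat) (Finset.mem_univ i)
          simp only [hadef] at hεa ⊢
          linarith only [hφi, hεa]
        have hteq : t * (G + a) = G := by
          rw [htdef]; field_simp
        have hy : f i y ≤ (1 - t) * f i (x k) + t * f i xhat := hcvx
        have e2 : (1 - t) * (f i (x k) + ε k) ≤ (1 - t) * G :=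
          mul_le_mul_of_nonneg_left h1 (by linarith)
        have e3 : t * (f i xhat + ε k) ≤ t * (-a) :=
          mul_le_mul_of_nonneg_left h2 ht0.le
        linarith only [e2, e3, hy, hteq]
      have hdy : d ≤ t * R := by
        have h1 : d ≤ dist (x k) y := Metric.infDist_le_dist_of_mem hyCk
        have h2 : x k - y = t • (x k - xhat) := by
          rw [hydef]
          rw [smul_sub]
          rw [sub_smul, one_smul]
          abel
        rw [dist_eq_norm, h2, norm_smul, Real.norm_eq_abs, abs_of_nonneg ht0.le] at h1
        calc d ≤ t * ‖x k - xhat‖ := h1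
          _ ≤ t * R := by
              exact mul_le_mul_of_nonneg_left hxk ht0.le
      have hta : t ≤ G / a := by
        rw [htdef, div_le_div_iff₀ hGa ha]
        have h8 := mul_le_mul_of_nonneg_left (by linarith only [hG] : a ≤ G + a) hG.le
        linarith only [h8]
      have h9 : d ≤ G / a * R := hdy.trans (mul_le_mul_of_nonneg_right hta hR.le)
      rw [div_mul_eq_mul_div, le_div_iff₀ ha] at h9
      rw [div_mul_eq_mul_div, div_le_iff₀ hR]
      linarith only [h9]
    have hScd : c * d ^ 2 ≤ S := by
      have h1 : (a / R * d) ^ 2 ≤ G ^ 2 :=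
        pow_le_pow_left₀ (by positivity) herr 2
      have h2 : (a / R * d) ^ 2 / ((m : ℝ) * U ^ 2) ≤ S := by
        refine le_trans ?_ hSG
        gcongr
      have h3 : (a / R * d) ^ 2 / ((m : ℝ) * U ^ 2) = c0 * d ^ 2 := by
        rw [hc0def]
        field_simp
      rw [h3] at h2
      have h6 : c * d ^ 2 ≤ c0 * d ^ 2 :=
        mul_le_mul_of_nonneg_right hcc0 (by positivity)
      linarith only [h2, h6]
    -- w k ≠ 0
    have hwne : w k ≠ 0 := by
      intro h0
      have h6 := hwS xhat hxhatCk
      rw [h0] at h6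
      simp only [inner_zero_left] at h6
      linarith only [h6, hSpos]
    have hwpos : 0 < ‖w k‖ ^ 2 := pow_pos (norm_pos_iff.2 hwne) 2
    -- ‖w‖² ≤ S
    have hwle : ‖w k‖ ^ 2 ≤ S := by
      have h1 : ‖w k‖ ≤ (m : ℝ)⁻¹ * ∑ i, ‖v i k‖ := by
        rw [hw k, norm_smul, Real.norm_eq_abs, abs_of_nonneg (by positivity)]
        exact mul_le_mul_of_nonneg_left (norm_sum_le _ _) (by positivity)
      have h2 : (∑ i, ‖v i k‖) ^ 2 ≤ (m : ℝ) * ∑ i, ‖v i k‖ ^ 2 := by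
        have := sq_sum_le_card_mul_sum_sq (s := (Finset.univ : Finset (Fin m)))
          (f := fun i => ‖v i k‖)
        simpa using this
      have h3 : ‖w k‖ ^ 2 ≤ ((m : ℝ)⁻¹ * ∑ i, ‖v i k‖) ^ 2 :=
        pow_le_pow_left₀ (norm_nonneg _) h1 2
      have h5 : ((m : ℝ)⁻¹) ^ 2 * ((m : ℝ) * ∑ i, ‖v i k‖ ^ 2) = S := by
        rw [hSdef]
        field_simp
      calc ‖w k‖ ^ 2 ≤ ((m : ℝ)⁻¹ * ∑ i, ‖v i k‖) ^ 2 := h3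
        _ = ((m : ℝ)⁻¹) ^ 2 * (∑ i, ‖v i k‖) ^ 2 := by ring
        _ ≤ ((m : ℝ)⁻¹) ^ 2 * ((m : ℝ) * ∑ i, ‖v i k‖ ^ 2) :=
            mul_le_mul_of_nonneg_left h2 (by positivity)
        _ = S := h5
    -- the step
    have hstep' : x (k + 1) = x k - (S / ‖w k‖ ^ 2) • w k := hstep k hwne
    set α : ℝ := S / ‖w k‖ ^ 2 with hαdef
    have hα0 : 0 < α := div_pos hSpos hwpos
    have hαW : α * ‖w k‖ ^ 2 = S := div_mul_cancel₀ S hwpos.ne'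
    have hα1 : 1 ≤ α := by
      rw [hαdef, le_div_iff₀ hwpos, one_mul]
      exact hwle
    -- main decrease inequality
    have hkey : ∀ z ∈ Ck, ‖x (k + 1) - z‖ ^ 2 ≤ ‖x k - z‖ ^ 2 - c * d ^ 2 := by
      intro z hz
      have hexpand : ‖x (k + 1) - z‖ ^ 2 =
          ‖x k - z‖ ^ 2 - 2 * (α * ⟪w k, x k - z⟫) + α ^ 2 * ‖w k‖ ^ 2 := by
        have hx1 : x (k + 1) - z = (x k - z) - α • w k := by
          rw [hstep']; abel
        rw [hx1, norm_sub_sq_real, real_inner_smul_right, real_inner_comm, norm_smul,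
          Real.norm_eq_abs, abs_of_nonneg hα0.le, mul_pow]
      rw [hexpand]
      have hP : S ≤ ⟪w k, x k - z⟫ := hwS z hz
      have hαS : α ^ 2 * ‖w k‖ ^ 2 = α * S := by
        rw [pow_two, mul_assoc, hαW]
      rw [hαS]
      have q1 : α * S ≤ α * ⟪w k, x k - z⟫ := mul_le_mul_of_nonneg_left hP hα0.le
      have q2 : S ≤ α * S := le_mul_of_one_le_left hSpos.le hα1
      linarith only [q1, q2, hScd]
    -- Fejér part
    have hFejer : ‖x (k + 1) - xhat‖ ≤ R := by
      have h1 := hkey xhat hxhatCk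
      have h2 : ‖x k - xhat‖ ^ 2 ≤ R ^ 2 := pow_le_pow_left₀ (norm_nonneg _) hxk 2
      have h3 : ‖x (k + 1) - xhat‖ ^ 2 ≤ R ^ 2 := by
        have h4 := mul_nonneg hc.le (sq_nonneg d)
        linarith only [h1, h2, h4]
      calc ‖x (k + 1) - xhat‖ = Real.sqrt (‖x (k + 1) - xhat‖ ^ 2) :=
            (Real.sqrt_sq (norm_nonneg _)).symm
        _ ≤ Real.sqrt (R ^ 2) := Real.sqrt_le_sqrt h3
        _ = R := Real.sqrt_sq hR.le
    refine ⟨hFejer, ?_⟩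
    -- contraction of distances
    set d' : ℝ := Metric.infDist (x (k + 1)) Ck with hd'def
    have hd'0 : 0 ≤ d' := Metric.infDist_nonneg
    have hd'sq : d' ^ 2 + c * d ^ 2 ≤ d ^ 2 := by
      set b : ℝ := Real.sqrt (d' ^ 2 + c * d ^ 2) with hbdef
      have hbd : b ≤ d := by
        by_contra hcon
        push_neg at hcon
        obtain ⟨z, hz, hlt⟩ := (Metric.infDist_lt_iff hCkne).1 hcon
        have h1 : d' ≤ dist (x (k + 1)) z := Metric.infDist_le_dist_of_mem hz
        have h2 : ‖x (k + 1) - z‖ ^ 2 ≤ ‖x k - z‖ ^ 2 - c * d ^ 2 := hkey z hz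
        have h3 : d' ^ 2 + c * d ^ 2 ≤ ‖x k - z‖ ^ 2 := by
          rw [dist_eq_norm] at h1
          have h5 := pow_le_pow_left₀ hd'0 h1 2
          linarith only [h2, h5]
        have h4 : b ≤ ‖x k - z‖ := by
          rw [hbdef]
          calc Real.sqrt (d' ^ 2 + c * d ^ 2) ≤ Real.sqrt (‖x k - z‖ ^ 2) :=
              Real.sqrt_le_sqrt h3
            _ = ‖x k - z‖ := Real.sqrt_sq (norm_nonneg _)
        rw [dist_eq_norm] at hlt
        linarith only [h4, hlt]
      have hb2 : d' ^ 2 + c * d ^ 2 = b ^ 2 := (Real.sq_sqrt (by positivity)).symm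
      rw [hb2]
      exact pow_le_pow_left₀ (Real.sqrt_nonneg _) hbd 2
    have hd'lam : d' ≤ lam * d := by
      have h1 : d' ^ 2 ≤ (lam * d) ^ 2 := by
        have : (lam * d) ^ 2 = (1 - c) * d ^ 2 := by rw [mul_pow, hlamsq]
        rw [this]; linarith only [hd'sq]
      calc d' = Real.sqrt (d' ^ 2) := (Real.sqrt_sq hd'0).symm
        _ ≤ Real.sqrt ((lam * d) ^ 2) := Real.sqrt_le_sqrt h1
        _ = lam * d := Real.sqrt_sq (mul_nonneg hlam0.le hd0)
    -- pass to C^{k+1}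
    have hsubset : Ck ⊆ {z : EuclideanSpace ℝ (Fin n) | ∀ i, f i z + ε (k + 1) ≤ 0} := by
      intro z hz i
      have := hz i
      have hεlt : ε (k + 1) < ε k := hεanti (lt_add_one k)
      linarith only [hz i, hεlt]
    calc Metric.infDist (x (k + 1)) {z : EuclideanSpace ℝ (Fin n) | ∀ i, f i z + ε (k + 1) ≤ 0}
        ≤ d' := Metric.infDist_le_infDist_of_subset hsubset hCkne
      _ ≤ lam * d := hd'lam
  -- boundedness by induction
  have hball : ∀ k, N ≤ k → ‖x k - xhat‖ ≤ R := by
    intro k hk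
    induction k, hk using Nat.le_induction with
    | base => exact le_refl R
    | succ k hk ih => exact (key k hk ih).1
  refine ⟨N, lam, hlam0, hlam1, fun k hk => ⟨⟨xhat, ?_⟩, (key k hk (hball k hk)).2⟩⟩
  intro i
  have h1 : f i xhat ≤ φ := Finset.le_sup' (fun i => f i xhat) (Finset.mem_univ i)
  have h2 : ε k < a := hN k hk
  simp only [hadef] at h2
  linarith only [h1, h2, hφ]
end

section
/- Assume the PACA setting with the Slater condition. If the PACA sequence (xᵏ) is infinite (xᵏ ∉ C for every k), then the sequence of perturbation parameters is summable: Σ_{k=0}^∞ ε_k < ∞. -/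
open Filter Metric
open scoped RealInnerProductSpace

/-!
Fix a Slater point `x̂` with `fᵢ(x̂) ≤ -δ`. Once `ε_k ≤ δ/2`, every PACA step moves `xᵏ` closer
to `x̂`: the subgradient inequality at `x̂` gives `⟪wᵏ, xᵏ - x̂⟫ ≥ Sₖ + (δ - ε_k) Lₖ`, where `Sₖ` is
the numerator of `α_k` and `Lₖ` the mean multiplier, while Cauchy–Schwarz gives `‖wᵏ‖² ≤ Sₖ`,
i.e. `α_k ≥ 1`. Hence `‖xᵏ⁺¹ - x̂‖² ≤ ‖xᵏ - x̂‖² - δ Lₖ`. The iterates therefore stay in a ball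
around `x̂`, on which the subgradients are bounded by some `M`, and since some constraint is
violated at `xᵏ`, `Lₖ ≥ ε_k / (m M²)`. Telescoping bounds the partial sums of `ε`.
-/

theorem exists_pos_forall_le_neg {ι : Type*} [Finite ι] {a : ι → ℝ} (ha : ∀ i, a i < 0) :
    ∃ δ > 0, ∀ i, a i ≤ -δ := by
  cases isEmpty_or_nonempty ι
  · exact ⟨1, one_pos, fun i => isEmptyElim i⟩
  · obtain ⟨i₀, hi₀⟩ := Finite.exists_max a
    exact ⟨-a i₀, neg_pos.2 (ha i₀), fun i => by simpa using hi₀ i⟩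

theorem summable_of_le_sub_mul {D e : ℕ → ℝ} {c : ℝ} (hc : 0 < c) (he : ∀ k, 0 ≤ e k)
    (hD : ∀ k, 0 ≤ D k) (hstep : ∀ k, D k ≤ D 0 → D (k + 1) ≤ D k - c * e k) :
    Summable e := by
  have hpartial : ∀ N, D N ≤ D 0 - c * ∑ j ∈ Finset.range N, e j := by
    intro N
    induction N with
    | zero => simp
    | succ N ih =>
      have hsum : 0 ≤ ∑ j ∈ Finset.range N, e j := Finset.sum_nonneg fun j _ => he j
      rw [Finset.sum_range_succ]
      linarith [hstep N (by nlinarith)]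
  refine summable_of_sum_range_le (c := D 0 / c) he fun N => ?_
  rw [le_div_iff₀ hc]
  linarith [hpartial N, hD N]

section

variable {E : Type*} [NormedAddCommGroup E]

theorem exists_norm_subgradient_le [InnerProductSpace ℝ E] [ProperSpace E] {f : E → ℝ}
    (hf : Continuous f) (a : E) (R : ℝ) :
    ∃ M, ∀ x ∈ closedBall a R, ∀ g : E, (∀ z, f x + ⟪g, z - x⟫ ≤ f z) → ‖g‖ ≤ M := by
  obtain ⟨A, hA⟩ := (isCompact_closedBall a (R + 1)).exists_bound_of_continuousOn hf.continuousOn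
  refine ⟨max (2 * A) 1, fun x hx g hg => ?_⟩
  rcases eq_or_ne g 0 with rfl | hg0
  · simp
  -- Test the subgradient inequality at the point at distance one from `x` in direction `g`.
  set z := x + ‖g‖⁻¹ • g
  have hgz : ⟪g, z - x⟫ = ‖g‖ := by
    rw [add_sub_cancel_left, real_inner_smul_right, real_inner_self_eq_norm_mul_norm,
      inv_mul_cancel_left₀ (norm_ne_zero_iff.2 hg0)]
  have hx' : x ∈ closedBall a (R + 1) := closedBall_subset_closedBall (by linarith) hx
  have hz : z ∈ closedBall a (R + 1) := by
    rw [mem_closedBall] at hx ⊢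
    calc dist z a ≤ dist z x + dist x a := dist_triangle _ _ _
      _ ≤ 1 + R := by
        rw [dist_eq_norm, add_sub_cancel_left, norm_smul, norm_inv, norm_norm,
          inv_mul_cancel₀ (norm_ne_zero_iff.2 hg0)]
        linarith
      _ = R + 1 := add_comm _ _
  have hgfz := hg z
  rw [hgz] at hgfz
  linarith [le_max_left (2 * A) 1, (abs_le.1 (hA z hz)).2, (abs_le.1 (hA x hx')).1]

theorem exists_forall_norm_subgradient_le [InnerProductSpace ℝ E] [ProperSpace E] {ι : Type*}
    [Finite ι] {f : ι → E → ℝ} (hf : ∀ i, Continuous (f i)) (a : E) (R : ℝ) :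
    ∃ M > 0, ∀ i, ∀ x ∈ closedBall a R, ∀ g : E,
      (∀ z, f i x + ⟪g, z - x⟫ ≤ f i z) → ‖g‖ ≤ M := by
  choose M hM using fun i => exists_norm_subgradient_le (hf i) a R
  obtain ⟨B, hB⟩ := (Set.finite_range M).bddAbove
  exact ⟨max B 1, by positivity, fun i x hx g hg =>
    (hM i x hx g hg).trans ((hB ⟨i, rfl⟩).trans (le_max_left _ _))⟩

/-- For `a = fᵢ(xᵏ) + ε_k` and `u = uᵢᵏ`, this is the coefficient of `uᵢᵏ` in `vᵢᵏ`. -/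
noncomputable def pacaWeight (a : ℝ) (u : E) : ℝ := max 0 a / ‖u‖ ^ 2

theorem pacaWeight_nonneg (a : ℝ) (u : E) : 0 ≤ pacaWeight a u := by
  unfold pacaWeight; positivity

theorem norm_pacaWeight_smul_sq [NormedSpace ℝ E] {a : ℝ} {u : E} (hu : 0 < a → u ≠ 0) :
    ‖pacaWeight a u • u‖ ^ 2 = pacaWeight a u * a := by
  rw [norm_smul, Real.norm_of_nonneg (pacaWeight_nonneg a u), mul_pow]
  unfold pacaWeight
  rcases le_or_gt a 0 with ha | ha
  · simp [max_eq_left ha]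
  · have : ‖u‖ ^ 2 ≠ 0 := by simpa using hu ha
    rw [max_eq_right ha.le]
    field_simp

theorem div_sq_le_pacaWeight {a M : ℝ} {u : E} (ha : 0 < a) (hu : u ≠ 0) (huM : ‖u‖ ≤ M) :
    a / M ^ 2 ≤ pacaWeight a u := by
  unfold pacaWeight
  rw [max_eq_right ha.le]
  have hu0 : 0 < ‖u‖ := norm_pos_iff.2 hu
  exact div_le_div_of_nonneg_left ha.le (by positivity) (pow_le_pow_left₀ hu0.le huM 2)

theorem norm_pacaWeight_smul_sq_add_le_inner [InnerProductSpace ℝ E] {f : E → ℝ} {x y u : E}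
    {ε δ : ℝ}
    (hsub : f x + ⟪u, y - x⟫ ≤ f y) (hy : f y ≤ -δ) (hu : 0 < f x + ε → u ≠ 0) :
    ‖pacaWeight (f x + ε) u • u‖ ^ 2 + pacaWeight (f x + ε) u * (δ - ε) ≤
      ⟪pacaWeight (f x + ε) u • u, x - y⟫ := by
  have hxy : f x + δ ≤ ⟪u, x - y⟫ := by
    rw [← neg_sub, inner_neg_right] at hsub
    linarith
  rw [norm_pacaWeight_smul_sq hu, real_inner_smul_left, ← mul_add]
  exact mul_le_mul_of_nonneg_left (by linarith) (pacaWeight_nonneg _ _)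

theorem norm_avg_sq_le [NormedSpace ℝ E] {ι : Type*} [Fintype ι] [Nonempty ι] (v : ι → E) :
    ‖(Fintype.card ι : ℝ)⁻¹ • ∑ i, v i‖ ^ 2 ≤ (Fintype.card ι : ℝ)⁻¹ * ∑ i, ‖v i‖ ^ 2 := by
  have hm : (0 : ℝ) < Fintype.card ι := by exact_mod_cast Fintype.card_pos
  have hcs : (∑ i, ‖v i‖) ^ 2 ≤ Fintype.card ι * ∑ i, ‖v i‖ ^ 2 := by
    simpa using sq_sum_le_card_mul_sum_sq (s := Finset.univ) (f := fun i => ‖v i‖)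
  calc ‖(Fintype.card ι : ℝ)⁻¹ • ∑ i, v i‖ ^ 2
      ≤ ((Fintype.card ι : ℝ)⁻¹ * ∑ i, ‖v i‖) ^ 2 := by
        rw [norm_smul, Real.norm_of_nonneg (by positivity)]
        gcongr
        exact norm_sum_le _ _
    _ = (Fintype.card ι : ℝ)⁻¹ ^ 2 * (∑ i, ‖v i‖) ^ 2 := mul_pow _ _ _
    _ ≤ (Fintype.card ι : ℝ)⁻¹ ^ 2 * (Fintype.card ι * ∑ i, ‖v i‖ ^ 2) := by gcongr
    _ = (Fintype.card ι : ℝ)⁻¹ * ∑ i, ‖v i‖ ^ 2 := by field_simp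

theorem norm_sub_smul_sq_le [InnerProductSpace ℝ E] {w d : E} {S D : ℝ} (hw : w ≠ 0)
    (hS : ‖w‖ ^ 2 ≤ S) (hD : 0 ≤ D) (h : S + D ≤ ⟪w, d⟫) :
    ‖d - (S / ‖w‖ ^ 2) • w‖ ^ 2 ≤ ‖d‖ ^ 2 - 2 * D := by
  have hw2 : 0 < ‖w‖ ^ 2 := by positivity
  set α := S / ‖w‖ ^ 2
  have hα : 1 ≤ α := (one_le_div hw2).2 hS
  have hαw : α * ‖w‖ ^ 2 = S := div_mul_cancel₀ _ hw2.ne'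
  have hexp : ‖d - α • w‖ ^ 2 = ‖d‖ ^ 2 - 2 * α * ⟪w, d⟫ + α * (α * ‖w‖ ^ 2) := by
    rw [norm_sub_sq_real, real_inner_smul_right, norm_smul, Real.norm_eq_abs, mul_pow, sq_abs,
      real_inner_comm]
    ring
  rw [hexp, hαw]
  nlinarith [mul_le_mul_of_nonneg_left h (by linarith : 0 ≤ 2 * α), hw2]

theorem pacaStep_ne_zero_and_norm_sq_le [InnerProductSpace ℝ E] {ι : Type*} [Fintype ι]
    [Nonempty ι] {f : ι → E → ℝ} {x y w : E} {u v : ι → E} {ε δ M : ℝ}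
    (hsub : ∀ i, f i x + ⟪u i, y - x⟫ ≤ f i y) (hy : ∀ i, f i y ≤ -δ)
    (hu : ∀ i, 0 < f i x + ε → u i ≠ 0) (huM : ∀ i, ‖u i‖ ≤ M)
    (hv : ∀ i, v i = pacaWeight (f i x + ε) (u i) • u i)
    (hw : w = (Fintype.card ι : ℝ)⁻¹ • ∑ i, v i)
    (hε : 0 < ε) (hεδ : 2 * ε ≤ δ) (hviol : ∃ i, 0 < f i x) :
    w ≠ 0 ∧
      ‖x - (((Fintype.card ι : ℝ)⁻¹ * ∑ i, ‖v i‖ ^ 2) / ‖w‖ ^ 2) • w - y‖ ^ 2 ≤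
        ‖x - y‖ ^ 2 - δ / (Fintype.card ι * M ^ 2) * ε := by
  set m : ℝ := (Fintype.card ι : ℝ)
  have hm : 0 < m := Nat.cast_pos.2 Fintype.card_pos
  have hδ : 0 < δ := by linarith
  set lam := fun i => pacaWeight (f i x + ε) (u i)
  set S := m⁻¹ * ∑ i, ‖v i‖ ^ 2
  set L := m⁻¹ * ∑ i, lam i
  have hinner : S + (δ - ε) * L ≤ ⟪w, x - y⟫ := by
    have hsum := Finset.sum_le_sum fun i (_ : i ∈ Finset.univ) =>
      norm_pacaWeight_smul_sq_add_le_inner (ε := ε) (hsub i) (hy i) (hu i)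
    simp only [← hv, Finset.sum_add_distrib, ← Finset.sum_mul] at hsum
    rw [hw, real_inner_smul_left, sum_inner]
    have := mul_le_mul_of_nonneg_left hsum (inv_nonneg.2 hm.le)
    linarith
  obtain ⟨i₀, hi₀⟩ := hviol
  have hu₀ : u i₀ ≠ 0 := hu i₀ (by linarith)
  have hMpos : 0 < M := (norm_pos_iff.2 hu₀).trans_le (huM i₀)
  have hL : ε / (m * M ^ 2) ≤ L := by
    have hlam₀ : ε / M ^ 2 ≤ lam i₀ :=
      (div_le_div_of_nonneg_right (by linarith) (by positivity)).trans
        (div_sq_le_pacaWeight (by linarith) hu₀ (huM i₀))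
    have hsum : ε / M ^ 2 ≤ ∑ i, lam i := hlam₀.trans
      (Finset.single_le_sum (f := lam) (fun i _ => pacaWeight_nonneg _ _) (Finset.mem_univ i₀))
    calc ε / (m * M ^ 2) = m⁻¹ * (ε / M ^ 2) := by field_simp
      _ ≤ L := mul_le_mul_of_nonneg_left hsum (by positivity)
  have hD : δ / (m * M ^ 2) * ε ≤ 2 * ((δ - ε) * L) := by
    have : δ / (m * M ^ 2) * ε = 2 * (δ / 2 * (ε / (m * M ^ 2))) := by ring
    rw [this]
    gcongr
    · linarith
    · linarith
  have hD0 : 0 < (δ - ε) * L := by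
    have : 0 < δ / (m * M ^ 2) * ε := by positivity
    linarith
  have hS : ‖w‖ ^ 2 ≤ S := hw ▸ norm_avg_sq_le v
  have hw0 : w ≠ 0 := by
    rintro rfl
    rw [inner_zero_left] at hinner
    linarith [sq_nonneg ‖(0 : E)‖]
  refine ⟨hw0, ?_⟩
  rw [sub_right_comm]
  linarith [norm_sub_smul_sq_le hw0 hS hD0.le hinner]

end

theorem stmt_18_general {n m : ℕ}
    (f : Fin m → EuclideanSpace ℝ (Fin n) → ℝ)
    (hconv : ∀ i, ConvexOn ℝ Set.univ (f i))
    (xhat : EuclideanSpace ℝ (Fin n)) (hslater : ∀ i, f i xhat < 0)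
    (ε : ℕ → ℝ) (hεpos : ∀ k, 0 < ε k)
    (hεlim : Tendsto ε atTop (nhds 0))
    (x : ℕ → EuclideanSpace ℝ (Fin n))
    (u v : Fin m → ℕ → EuclideanSpace ℝ (Fin n))
    (w : ℕ → EuclideanSpace ℝ (Fin n))
    (hsub : ∀ i k, ∀ z, f i (x k) + ⟪u i k, z - x k⟫ ≤ f i z)
    (hune : ∀ i k, 0 < f i (x k) + ε k → u i k ≠ 0)
    (hv : ∀ i k, v i k = (max 0 (f i (x k) + ε k) / ‖u i k‖ ^ 2) • u i k)
    (hw : ∀ k, w k = (m : ℝ)⁻¹ • ∑ i, v i k)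
    (hstep : ∀ k, w k ≠ 0 →
      x (k + 1) = x k - (((m : ℝ)⁻¹ * ∑ i, ‖v i k‖ ^ 2) / ‖w k‖ ^ 2) • w k)
    (hinfinite : ∀ k, ∃ i, 0 < f i (x k)) :
    Summable ε := by
  obtain ⟨i₀, -⟩ := hinfinite 0
  have : Nonempty (Fin m) := ⟨i₀⟩
  have hm : (0 : ℝ) < m := Nat.cast_pos.2 i₀.pos
  obtain ⟨δ, hδ, hxhat⟩ := exists_pos_forall_le_neg hslater
  obtain ⟨K, hK⟩ := eventually_atTop.1 (hεlim.eventually_le_const (half_pos hδ))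
  obtain ⟨M, hM, huM⟩ := exists_forall_norm_subgradient_le
    (fun i => continuousOn_univ.1 ((hconv i).continuousOn isOpen_univ)) xhat ‖x K - xhat‖
  refine (summable_nat_add_iff K).1 <|
    summable_of_le_sub_mul (D := fun j => ‖x (j + K) - xhat‖ ^ 2) (c := δ / (m * M ^ 2))
      (by positivity) (fun j => (hεpos _).le) (fun j => by positivity) fun j hj => ?_
  have hball : x (j + K) ∈ closedBall xhat ‖x K - xhat‖ := by
    rw [mem_closedBall, dist_eq_norm]
    exact (pow_le_pow_iff_left₀ (norm_nonneg _) (norm_nonneg _) two_ne_zero).1 (by simpa using hj)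
  obtain ⟨hw0, hdec⟩ := pacaStep_ne_zero_and_norm_sq_le (fun i => hsub i _ xhat) hxhat (hune · _)
    (fun i => huM i _ hball _ (hsub i _)) (hv · _) (by simpa using hw _) (hεpos _)
    (by linarith [hK _ (Nat.le_add_left K j)]) (hinfinite _)
  simp only [Fintype.card_fin] at hdec
  rw [add_right_comm, hstep _ hw0]
  exact hdec

theorem stmt_18 {n m : ℕ} (hm : 0 < m)
    (f : Fin m → EuclideanSpace ℝ (Fin n) → ℝ)
    (hconv : ∀ i, ConvexOn ℝ Set.univ (f i))
    (xhat : EuclideanSpace ℝ (Fin n)) (hslater : ∀ i, f i xhat < 0)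
    (ε : ℕ → ℝ) (hεpos : ∀ k, 0 < ε k) (hεanti : StrictAnti ε)
    (hεlim : Tendsto ε atTop (nhds 0))
    (x : ℕ → EuclideanSpace ℝ (Fin n))
    (u v : Fin m → ℕ → EuclideanSpace ℝ (Fin n))
    (w : ℕ → EuclideanSpace ℝ (Fin n))
    (hsub : ∀ i k, ∀ z, f i (x k) + ⟪u i k, z - x k⟫ ≤ f i z)
    (hune : ∀ i k, 0 < f i (x k) + ε k → u i k ≠ 0)
    (hv : ∀ i k, v i k = (max 0 (f i (x k) + ε k) / ‖u i k‖ ^ 2) • u i k)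
    (hw : ∀ k, w k = (m : ℝ)⁻¹ • ∑ i, v i k)
    (hstep0 : ∀ k, w k = 0 → x (k + 1) = x k)
    (hstep : ∀ k, w k ≠ 0 →
      x (k + 1) = x k - (((m : ℝ)⁻¹ * ∑ i, ‖v i k‖ ^ 2) / ‖w k‖ ^ 2) • w k)
    (hinfinite : ∀ k, ∃ i, 0 < f i (x k)) :
    Summable ε :=
  stmt_18_general f hconv xhat hslater ε hεpos hεlim x u v w hsub hune hv hw hstep hinfinite
end
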